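/- arXiv:1904.02400 — 5 statements merged into one kernel-verified Lean document; each statement's English description precedes it below -/
import Mathlib

section
/- The Riedtmann–Peng formula: for objects L, M, N in a finitary abelian category A over a finite field, the number g^L_{MN} of subobjects N' of L with N' ≅ N and L/N' ≅ M equals (|Ext^1_A(M,N)_L| / |Hom_A(M,N)|) · (a_L / (a_M · a_N)), where Ext^1_A(M,N)_L denotes the set of equivalence classes of extensions of M by N with middle term isomorphic to L, and a_X = |Aut(X)|. -/
open CategoryTheory CategoryTheory.Limits

noncomputable section
universe v u
variable {C : Type u} [Category.{v} C] [Abelian C]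

def IsSES {N L M : C} (f : N ⟶ L) (g : L ⟶ M) : Prop :=
  ∃ w : f ≫ g = 0, (CategoryTheory.ShortComplex.mk f g w).ShortExact

def ExtW (M N L : C) : Type _ := {p : (N ⟶ L) × (L ⟶ M) // IsSES p.1 p.2}

def extRel (M N L : C) (p q : ExtW M N L) : Prop :=
  ∃ θ : L ≅ L, p.1.1 ≫ θ.hom = q.1.1 ∧ θ.hom ≫ q.1.2 = p.1.2

def ExtClasses (M N L : C) := Quot (extRel M N L)

/-- `g^L_{MN}`: the number of subobjects `N' ⊆ L` with `N' ≅ N` and `L/N' ≅ M`. -/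
def gNum (M N L : C) : ℕ :=
  Nat.card {S : Subobject L // Nonempty ((S : C) ≅ N) ∧ Nonempty (cokernel S.arrow ≅ M)}

/-! ### Auxiliary material for the proof -/

namespace RP

open MulAction

/-- A generic counting lemma: if all stabilizers of a finite group action on a
finite type have the same cardinality `n`, then `|X| * n = |X/G| * |G|`. -/
theorem card_mul_card_stab {G X : Type*} [Group G] [Finite G] [Finite X] [MulAction G X]
    {n : ℕ} (hn : ∀ x : X, Nat.card (stabilizer G x) = n) :
    Nat.card X * n = Nat.card (Quotient (orbitRel G X)) * Nat.card G := by
  classical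
  cases nonempty_fintype X
  haveI : Fintype (orbitRel.Quotient G X) := Fintype.ofFinite _
  have os : ∀ b : X, Nat.card (orbit G b) * Nat.card (stabilizer G b) = Nat.card G := by
    intro b
    rw [← Nat.card_prod]
    exact Nat.card_congr (orbitProdStabilizerEquivGroup G b)
  have e := selfEquivSigmaOrbits' G X
  have h1 : Nat.card X = ∑ ω : orbitRel.Quotient G X, Nat.card ω.orbit := by
    rw [Nat.card_congr e]
    haveI : ∀ ω : orbitRel.Quotient G X, Fintype ω.orbit := fun _ => Fintype.ofFinite _
    simp [Nat.card_eq_fintype_card, Fintype.card_sigma]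
  have h2 : ∀ ω : orbitRel.Quotient G X, Nat.card ω.orbit * n = Nat.card G := by
    intro ω
    rw [orbitRel.Quotient.orbit_eq_orbit_out _ Quotient.out_eq', ← hn ω.out]
    exact os _
  calc Nat.card X * n = ∑ ω : orbitRel.Quotient G X, Nat.card ω.orbit * n := by
        rw [h1, Finset.sum_mul]
    _ = ∑ _ω : orbitRel.Quotient G X, Nat.card G := by
        exact Finset.sum_congr rfl fun ω _ => h2 ω
    _ = Nat.card (Quotient (orbitRel G X)) * Nat.card G := by
        rw [Finset.sum_const, Finset.card_univ, smul_eq_mul,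
          Nat.card_eq_fintype_card (α := orbitRel.Quotient G X)]

variable {C : Type u} [Category.{v} C] [Abelian C]

instance (X Y : C) [Finite (X ⟶ Y)] [Finite (Y ⟶ X)] : Finite (X ≅ Y) :=
  Finite.of_injective (fun i => ((i.hom, i.inv) : (X ⟶ Y) × (Y ⟶ X)))
    (fun i j h => Iso.ext (congrArg Prod.fst h))

instance (X : C) [Finite (X ⟶ X)] : Finite (Aut X) := inferInstanceAs (Finite (X ≅ X))

instance (M N L : C) [Finite (N ⟶ L)] [Finite (L ⟶ M)] : Finite (ExtW M N L) :=
  inferInstanceAs (Finite {p : (N ⟶ L) × (L ⟶ M) // IsSES p.1 p.2})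

section Structural

lemma _root_.IsSES.zero {N L M : C} {f : N ⟶ L} {g : L ⟶ M} (h : IsSES f g) : f ≫ g = 0 := h.choose

lemma _root_.IsSES.shortExact {N L M : C} {f : N ⟶ L} {g : L ⟶ M} (h : IsSES f g) :
    (ShortComplex.mk f g h.zero).ShortExact := h.choose_spec

lemma _root_.IsSES.mono {N L M : C} {f : N ⟶ L} {g : L ⟶ M} (h : IsSES f g) : Mono f :=
  h.shortExact.mono_f

lemma _root_.IsSES.epi {N L M : C} {f : N ⟶ L} {g : L ⟶ M} (h : IsSES f g) : Epi g :=
  h.shortExact.epi_g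

lemma isSES_iso {N L M N' L' M' : C} {f : N ⟶ L} {g : L ⟶ M}
    (h : IsSES f g) (β : N' ≅ N) (θ : L ≅ L') (α : M ≅ M') :
    IsSES (β.hom ≫ f ≫ θ.hom) (θ.inv ≫ g ≫ α.hom) := by
  obtain ⟨w, hw⟩ := h
  have w' : (β.hom ≫ f ≫ θ.hom) ≫ (θ.inv ≫ g ≫ α.hom) = 0 := by
    simp [reassoc_of% w]
  exact ⟨w', ShortComplex.shortExact_of_iso
    (ShortComplex.isoMk β.symm θ α (by simp) (by simp)) hw⟩

/-- `g` is a cokernel of `f`, so `cokernel f ≅ M`. -/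
def _root_.IsSES.cokernelIso {N L M : C} {f : N ⟶ L} {g : L ⟶ M} (h : IsSES f g) :
    cokernel f ≅ M :=
  IsColimit.coconePointUniqueUpToIso (cokernelIsCokernel f) h.shortExact.gIsCokernel

end Structural

section ActL

variable {M N L : C}

instance : SMul (Aut L) (ExtW M N L) :=
  ⟨fun θ p => ⟨(p.1.1 ≫ θ.hom, θ.inv ≫ p.1.2), by
    simpa using isSES_iso p.2 (Iso.refl N) (θ : L ≅ L) (Iso.refl M)⟩⟩

lemma smulL_fst (θ : Aut L) (p : ExtW M N L) : (θ • p).1.1 = p.1.1 ≫ θ.hom := rfl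
lemma smulL_snd (θ : Aut L) (p : ExtW M N L) : (θ • p).1.2 = θ.inv ≫ p.1.2 := rfl

instance : MulAction (Aut L) (ExtW M N L) where
  one_smul p := Subtype.ext (Prod.ext
    (show p.1.1 ≫ 𝟙 L = p.1.1 by simp) (show 𝟙 L ≫ p.1.2 = p.1.2 by simp))
  mul_smul a b p := Subtype.ext (Prod.ext
    (show p.1.1 ≫ (b.hom ≫ a.hom) = (p.1.1 ≫ b.hom) ≫ a.hom by simp)
    (show (a.inv ≫ b.inv) ≫ p.1.2 = a.inv ≫ b.inv ≫ p.1.2 by simp))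

lemma mem_stabL_iff (θ : Aut L) (p : ExtW M N L) :
    θ ∈ stabilizer (Aut L) p ↔ p.1.1 ≫ θ.hom = p.1.1 ∧ θ.hom ≫ p.1.2 = p.1.2 := by
  rw [mem_stabilizer_iff]
  constructor
  · intro h
    have h1 : p.1.1 ≫ θ.hom = p.1.1 := by
      conv_rhs => rw [← h, smulL_fst]
    have h2 : θ.inv ≫ p.1.2 = p.1.2 := by
      conv_rhs => rw [← h, smulL_snd]
    refine ⟨h1, ?_⟩
    conv_lhs => rw [← h2]
    exact Iso.hom_inv_id_assoc (X := L) (Y := L) θ _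
  · rintro ⟨h1, h2⟩
    refine Subtype.ext (Prod.ext h1 ?_)
    show θ.inv ≫ p.1.2 = p.1.2
    exact (Iso.inv_comp_eq (α := (θ : L ≅ L))).2 h2.symm

lemma card_stabL (p : ExtW M N L) :
    Nat.card (stabilizer (Aut L) p) = Nat.card (M ⟶ N) := by
  obtain ⟨⟨f, g⟩, hp⟩ := p
  obtain ⟨w, hw⟩ := id hp
  haveI := hw.mono_f
  haveI := hw.epi_g
  symm
  apply Nat.card_congr
  have hx2 : ∀ h : M ⟶ N, (g ≫ h ≫ f) ≫ (g ≫ h ≫ f) = 0 := by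
    intro h
    have : f ≫ g = 0 := w
    simp [reassoc_of% this]
  refine Equiv.ofBijective (fun h =>
    ⟨⟨𝟙 L + g ≫ h ≫ f, 𝟙 L - g ≫ h ≫ f, ?_, ?_⟩, ?_⟩) ⟨?_, ?_⟩
  · simp only [Preadditive.add_comp, Preadditive.comp_sub, Preadditive.sub_comp,
      Category.id_comp, Category.comp_id, hx2 h]
    abel
  · simp only [Preadditive.sub_comp, Preadditive.comp_add, Preadditive.add_comp,
      Category.id_comp, Category.comp_id, hx2 h]
    abel
  · refine (mem_stabL_iff _ _).2 ?_
    constructor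
    · show f ≫ (𝟙 L + g ≫ h ≫ f) = f
      have : f ≫ g = 0 := w
      simp [Preadditive.comp_add, reassoc_of% this]
    · show (𝟙 L + g ≫ h ≫ f) ≫ g = g
      have : f ≫ g = 0 := w
      simp [Preadditive.add_comp, this]
  · intro h₁ h₂ hh
    have : 𝟙 L + g ≫ h₁ ≫ f = 𝟙 L + g ≫ h₂ ≫ f := congrArg (fun z => (z : L ≅ L).hom)
      (congrArg Subtype.val hh)
    have : g ≫ h₁ ≫ f = g ≫ h₂ ≫ f := by
      exact add_left_cancel this
    rwa [cancel_epi, cancel_mono] at this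
  · rintro ⟨θ, hθ⟩
    replace hθ := (mem_stabL_iff _ _).1 hθ
    obtain ⟨h1, h2⟩ := hθ
    -- `θ.hom - 𝟙 L` kills `f`, so it factors through `g`
    have hd : f ≫ ((θ : L ≅ L).hom - 𝟙 L) = 0 := by
      simp [Preadditive.comp_sub, h1]
    set S := ShortComplex.mk f g w with hS
    have hu := hw.exact.g_desc ((θ : L ≅ L).hom - 𝟙 L) hd
    set u : M ⟶ L := hw.exact.desc ((θ : L ≅ L).hom - 𝟙 L) hd with hudef
    have hug : u ≫ g = 0 := by
      rw [← cancel_epi g, reassoc_of% hu]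
      simp [Preadditive.sub_comp, h2]
      erw [Category.id_comp, sub_self]
    have hl := hw.exact.lift_f u hug
    refine ⟨hw.exact.lift u hug, ?_⟩
    apply Subtype.ext
    apply Iso.ext
    show 𝟙 L + g ≫ hw.exact.lift u hug ≫ f = (θ : L ≅ L).hom
    rw [hl, hu]
    abel

/-- `ExtClasses` is the quotient by the `Aut L`-action. -/
def extClassesEquiv (M N L : C) :
    ExtClasses M N L ≃ Quotient (orbitRel (Aut L) (ExtW M N L)) :=
  Quot.congrRight fun p q => by
    have h1 : extRel M N L p q ↔ ∃ θ : Aut L, θ • p = q := by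
      constructor
      · rintro ⟨θ, ha, hb⟩
        refine ⟨θ, Subtype.ext (Prod.ext ha ?_)⟩
        show θ.inv ≫ p.1.2 = q.1.2
        rw [Iso.inv_comp_eq, hb]
      · rintro ⟨θ, h⟩
        refine ⟨θ, ?_, ?_⟩
        · conv_rhs => rw [← h, smulL_fst]
        · have h2 : θ.inv ≫ p.1.2 = q.1.2 := by conv_rhs => rw [← h, smulL_snd]
          rw [← h2]
          exact Iso.hom_inv_id_assoc (X := L) (Y := L) θ _
    rw [h1]
    constructor
    · rintro ⟨θ, h⟩
      exact Setoid.symm' _ (by rw [orbitRel_apply, mem_orbit_iff]; exact ⟨θ, h⟩)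
    · intro h
      have := Setoid.symm' _ h
      rw [orbitRel_apply, mem_orbit_iff] at this
      exact this

end ActL

section ActMN

variable {M N L : C}

instance : SMul (Aut M × Aut N) (ExtW M N L) :=
  ⟨fun γ p => ⟨(γ.2.inv ≫ p.1.1, p.1.2 ≫ γ.1.hom), by
    have h := isSES_iso p.2 (γ.2 : N ≅ N).symm (Iso.refl L) (γ.1 : M ≅ M)
    simp at h
    exact h⟩⟩

lemma smulMN_fst (γ : Aut M × Aut N) (p : ExtW M N L) : (γ • p).1.1 = γ.2.inv ≫ p.1.1 := rfl
lemma smulMN_snd (γ : Aut M × Aut N) (p : ExtW M N L) : (γ • p).1.2 = p.1.2 ≫ γ.1.hom := rfl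

instance : MulAction (Aut M × Aut N) (ExtW M N L) where
  one_smul p := Subtype.ext (Prod.ext
    (show 𝟙 N ≫ p.1.1 = p.1.1 by simp) (show p.1.2 ≫ 𝟙 M = p.1.2 by simp))
  mul_smul a b p := Subtype.ext (Prod.ext
    (show (a.2.inv ≫ b.2.inv) ≫ p.1.1 = a.2.inv ≫ b.2.inv ≫ p.1.1 by simp)
    (show p.1.2 ≫ (b.1.hom ≫ a.1.hom) = (p.1.2 ≫ b.1.hom) ≫ a.1.hom by simp))

lemma card_stabMN (p : ExtW M N L) :
    Nat.card (stabilizer (Aut M × Aut N) p) = 1 := by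
  have hbot : stabilizer (Aut M × Aut N) p = ⊥ := by
    rw [eq_bot_iff]
    intro γ hγ
    rw [mem_stabilizer_iff] at hγ
    haveI := p.2.mono
    haveI := p.2.epi
    have h1 : γ.2.inv ≫ p.1.1 = p.1.1 := by
      conv_rhs => rw [← hγ, smulMN_fst]
    have h2 : p.1.2 ≫ γ.1.hom = p.1.2 := by
      conv_rhs => rw [← hγ, smulMN_snd]
    have e2 : γ.2.inv = 𝟙 N := by
      rw [← cancel_mono p.1.1, h1, Category.id_comp]
    have e1 : γ.1.hom = 𝟙 M := by
      rw [← cancel_epi p.1.2, h2, Category.comp_id]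
    rw [Subgroup.mem_bot]
    have g2 : γ.2 = 1 := by
      apply Iso.ext
      have := γ.2.hom_inv_id
      rw [e2, Category.comp_id] at this
      exact this
    have g1 : γ.1 = 1 := Iso.ext e1
    exact Prod.ext g1 g2
  rw [hbot]
  exact Subgroup.card_bot

/-- The subobject associated to a short exact sequence. -/
def Phi (p : ExtW M N L) :
    {S : Subobject L // Nonempty ((S : C) ≅ N) ∧ Nonempty (cokernel S.arrow ≅ M)} :=
  haveI : Mono p.1.1 := p.2.mono
  ⟨Subobject.mk p.1.1,
    ⟨Subobject.underlyingIso p.1.1⟩,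
    ⟨(cokernelIsoOfEq ((Subobject.underlyingIso_hom_comp_eq_mk p.1.1).symm)).trans
      ((cokernelEpiComp (Subobject.underlyingIso p.1.1).hom p.1.1).trans p.2.cokernelIso)⟩⟩

lemma Phi_smul (γ : Aut M × Aut N) (p : ExtW M N L) : Phi (γ • p) = Phi p := by
  haveI : Mono p.1.1 := p.2.mono
  haveI : Mono ((γ • p).1.1) := (γ • p).2.mono
  apply Subtype.ext
  show Subobject.mk (γ • p).1.1 = Subobject.mk p.1.1
  have hfst : (γ • p).1.1 = γ.2.inv ≫ p.1.1 := smulMN_fst γ p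
  haveI : Mono (γ.2.inv ≫ p.1.1) := by rw [← hfst]; exact (γ • p).2.mono
  rw [Subobject.mk_eq_mk_of_comm ((γ • p).1.1) (γ.2.inv ≫ p.1.1) (Iso.refl N)
    (by simpa using hfst.symm)]
  exact Subobject.mk_eq_mk_of_comm _ _ (γ.2 : N ≅ N).symm rfl

/-- The induced map on the orbit quotient. -/
def PhiBar : Quotient (orbitRel (Aut M × Aut N) (ExtW M N L)) →
    {S : Subobject L // Nonempty ((S : C) ≅ N) ∧ Nonempty (cokernel S.arrow ≅ M)} :=
  Quot.lift Phi (by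
    intro p q h
    rw [orbitRel_apply, mem_orbit_iff] at h
    obtain ⟨γ, rfl⟩ := h
    exact Phi_smul γ q)

lemma PhiBar_bijective :
    Function.Bijective (PhiBar (M := M) (N := N) (L := L)) := by
  constructor
  · -- injective
    rintro ⟨p⟩ ⟨q⟩ h
    obtain ⟨⟨f, g⟩, hp⟩ := p
    obtain ⟨⟨f', g'⟩, hq⟩ := q
    haveI := hp.mono
    haveI := hp.epi
    haveI := hq.mono
    haveI := hq.epi
    have hmk : Subobject.mk f = Subobject.mk f' := congrArg Subtype.val h
    have hβ : (Subobject.isoOfMkEqMk f f' hmk).hom ≫ f' = f :=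
      Subobject.ofMkLEMk_comp hmk.le
    set β₀ := Subobject.isoOfMkEqMk f f' hmk with hβ₀
    obtain ⟨w, hw⟩ := id hp
    obtain ⟨w', hw'⟩ := id hq
    haveI := hw.mono_f
    haveI := hw.epi_g
    haveI := hw'.mono_f
    haveI := hw'.epi_g
    have hf'g : f' ≫ g = 0 := by
      rw [← cancel_epi β₀.hom, ← Category.assoc, hβ, comp_zero]
      exact w
    have hfg' : f ≫ g' = 0 := by
      rw [← hβ]
      simpa using w'
    have ha := hw'.exact.g_desc g hf'g
    have hb := hw.exact.g_desc g' hfg'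
    set a : M ⟶ M := hw'.exact.desc g hf'g with hadef
    set b : M ⟶ M := hw.exact.desc g' hfg' with hbdef
    have hab : a ≫ b = 𝟙 M := by
      rw [← cancel_epi g', reassoc_of% ha, hb, Category.comp_id]
    have hba : b ≫ a = 𝟙 M := by
      rw [← cancel_epi g, reassoc_of% hb, ha, Category.comp_id]
    apply Quot.sound
    refine orbitRel_apply.2 (mem_orbit_iff.2 ?_)
    refine ⟨(⟨a, b, hab, hba⟩, β₀.symm), Subtype.ext (Prod.ext ?_ ?_)⟩
    · show β₀.symm.inv ≫ f' = f
      simpa using hβ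
    · show g' ≫ a = g
      exact ha
  · -- surjective
    rintro ⟨S, ⟨e⟩, ⟨c⟩⟩
    have h1 : IsSES S.arrow (cokernel.π S.arrow) :=
      ⟨cokernel.condition _, ShortComplex.ShortExact.mk'
        (ShortComplex.exact_of_g_is_cokernel _ (cokernelIsCokernel _))
        inferInstance inferInstance⟩
    have h2 := isSES_iso h1 e.symm (Iso.refl L) c
    simp only [Iso.symm_hom, Iso.refl_hom, Iso.refl_inv, Category.comp_id,
      Category.id_comp] at h2
    refine ⟨Quot.mk _ ⟨(e.inv ≫ S.arrow, cokernel.π S.arrow ≫ c.hom), h2⟩, ?_⟩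
    apply Subtype.ext
    show Subobject.mk (e.inv ≫ S.arrow) = S
    haveI : Mono (e.inv ≫ S.arrow) := h2.mono
    exact Subobject.mk_eq_of_comm _ e.symm rfl

end ActMN

end RP

open RP MulAction in
/-- **Riedtmann–Peng formula.** -/
theorem riedtmann_peng [∀ X Y : C, Finite (X ⟶ Y)] (L M N : C) :
    (gNum M N L : ℚ) =
      (Nat.card (ExtClasses M N L) : ℚ) / (Nat.card (M ⟶ N) : ℚ) *
        ((Nat.card (Aut L) : ℚ) / ((Nat.card (Aut M) : ℚ) * (Nat.card (Aut N) : ℚ))) := by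
  classical
  have hA : Nat.card (ExtW M N L) * Nat.card (M ⟶ N)
      = Nat.card (ExtClasses M N L) * Nat.card (Aut L) := by
    rw [Nat.card_congr (extClassesEquiv M N L)]
    exact card_mul_card_stab card_stabL
  have hB : Nat.card (ExtW M N L)
      = gNum M N L * (Nat.card (Aut M) * Nat.card (Aut N)) := by
    have h := card_mul_card_stab (G := Aut M × Aut N) (X := ExtW M N L) card_stabMN
    rw [mul_one] at h
    rw [h, Nat.card_congr (Equiv.ofBijective _ (PhiBar_bijective (M := M) (N := N) (L := L)))]
    rw [gNum, Nat.card_prod]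
  have hHom : 0 < Nat.card (M ⟶ N) := @Nat.card_pos _ ⟨0⟩ _
  have hM : 0 < Nat.card (Aut M) := @Nat.card_pos _ ⟨1⟩ _
  have hN : 0 < Nat.card (Aut N) := @Nat.card_pos _ ⟨1⟩ _
  have hAq : (Nat.card (ExtW M N L) : ℚ) * (Nat.card (M ⟶ N) : ℚ)
      = (Nat.card (ExtClasses M N L) : ℚ) * (Nat.card (Aut L) : ℚ) := by
    exact_mod_cast congrArg (Nat.cast : ℕ → ℚ) hA
  have hBq : (Nat.card (ExtW M N L) : ℚ)
      = (gNum M N L : ℚ) * ((Nat.card (Aut M) : ℚ) * (Nat.card (Aut N) : ℚ)) := by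
    exact_mod_cast congrArg (Nat.cast : ℕ → ℚ) hB
  have hHomq : (Nat.card (M ⟶ N) : ℚ) ≠ 0 := by exact_mod_cast hHom.ne'
  have hMq : (Nat.card (Aut M) : ℚ) ≠ 0 := by exact_mod_cast hM.ne'
  have hNq : (Nat.card (Aut N) : ℚ) ≠ 0 := by exact_mod_cast hN.ne'
  field_simp
  linear_combination hAq - (Nat.card (M ⟶ N) : ℚ) * hBq
end
end

section
/- The Hall algebra multiplication on a finitary abelian category A is associative with unit [0]. -/
open CategoryTheory CategoryTheory.Limits
open scoped Classical

set_option linter.unusedSectionVars false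

noncomputable section

attribute [local instance] CategoryTheory.isIsomorphicSetoid

universe v u

variable {C : Type u} [Category.{v} C] [Abelian C]

/-- The Hall structure constant `|Ext¹(M,N)_L| / |Hom(M,N)|`. -/
def hallCoeff (M N L : C) : ℚ :=
  (Nat.card (ExtClasses M N L) : ℚ) / (Nat.card (M ⟶ N) : ℚ)

/-- Isomorphism classes of objects. -/
abbrev IsoCls (D : Type*) [Category D] := Quotient (isIsomorphicSetoid D)

/-- The underlying vector space of the Hall algebra of `C`. -/
abbrev HallAlg (D : Type*) [Category D] := IsoCls D →₀ ℚ

/-- Finiteness assumptions making the Hall multiplication well defined. -/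
class HallFinitary (C : Type u) [Category.{v} C] [Abelian C] : Prop where
  homFinite : ∀ X Y : C, Finite (X ⟶ Y)
  suppFinite : ∀ M N : C, {κ : IsoCls C | hallCoeff M N (Quotient.out κ) ≠ 0}.Finite

/-- The Hall product of two basis elements. -/
def hallMulBasis [HallFinitary C] (M N : C) : HallAlg C :=
  ⟨(HallFinitary.suppFinite M N).toFinset,
    fun κ => hallCoeff M N (Quotient.out κ), by
      intro κ
      simp [Set.Finite.mem_toFinset]⟩

/-- The multiplication of the Hall algebra of `C`. -/
def hallMul [HallFinitary C] (x y : HallAlg C) : HallAlg C :=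
  x.sum fun κ a => y.sum fun κ' b => (a * b) • hallMulBasis κ.out κ'.out

/-! ### Auxiliary development -/

section HallAssocAux

variable {M N L P X Z : C}

lemma IsSES.w {f : N ⟶ L} {g : L ⟶ M} (h : IsSES f g) : f ≫ g = 0 := h.choose

lemma IsSES.mono_s2 {f : N ⟶ L} {g : L ⟶ M} (h : IsSES f g) : Mono f :=
  h.choose_spec.mono_f

lemma IsSES.epi_s2 {f : N ⟶ L} {g : L ⟶ M} (h : IsSES f g) : Epi g :=
  h.choose_spec.epi_g

/-- `f` is a kernel of `g`. -/
def IsSES.fIsKernel {f : N ⟶ L} {g : L ⟶ M} (h : IsSES f g) :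
    IsLimit (KernelFork.ofι f h.w) :=
  h.choose_spec.fIsKernel

/-- `g` is a cokernel of `f`. -/
def IsSES.gIsCokernel {f : N ⟶ L} {g : L ⟶ M} (h : IsSES f g) :
    IsColimit (CokernelCofork.ofπ g h.w) :=
  h.choose_spec.gIsCokernel

lemma isSES_of_isLimit {f : N ⟶ L} {g : L ⟶ M} (w : f ≫ g = 0) [Mono f] [Epi g]
    (hl : IsLimit (KernelFork.ofι f w)) : IsSES f g :=
  ⟨w, { exact := (ShortComplex.mk f g w).exact_of_f_is_kernel hl }⟩

lemma isSES_of_isColimit {f : N ⟶ L} {g : L ⟶ M} (w : f ≫ g = 0) [Mono f] [Epi g]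
    (hc : IsColimit (CokernelCofork.ofπ g w)) : IsSES f g :=
  ⟨w, { exact := (ShortComplex.mk f g w).exact_of_g_is_cokernel hc }⟩

/-- Transport a short exact sequence along isomorphisms of its three entries. -/
lemma IsSES.of_iso {N' L' M' : C} {f : N ⟶ L} {g : L ⟶ M} (h : IsSES f g)
    (α : N ≅ N') (β : L ≅ L') (γ : M ≅ M') :
    IsSES (α.inv ≫ f ≫ β.hom) (β.inv ≫ g ≫ γ.hom) := by
  obtain ⟨w, hw⟩ := h
  refine ⟨?_, ?_⟩
  · simp [reassoc_of% w]
  · exact ShortComplex.shortExact_of_iso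
      (ShortComplex.isoMk α β γ (by simp) (by simp)) hw

lemma isSES_mono_cokernel (u : P ⟶ X) [Mono u] : IsSES u (cokernel.π u) :=
  isSES_of_isColimit (cokernel.condition u) (cokernelIsCokernel u)

lemma isSES_kernel_epi (p : X ⟶ M) [Epi p] : IsSES (kernel.ι p) p :=
  isSES_of_isLimit (kernel.condition p) (kernelIsKernel p)

/-- If `(u,v)` is a SES then the canonical map `cokernel u ≅ L`. -/
def cokerIso {u : P ⟶ X} {v : X ⟶ L} (h : IsSES u v) : cokernel u ≅ L where
  hom := cokernel.desc u v h.w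
  inv := (CokernelCofork.IsColimit.desc' h.gIsCokernel (cokernel.π u)
            (cokernel.condition u)).1
  hom_inv_id := by
    have h1 := (CokernelCofork.IsColimit.desc' h.gIsCokernel (cokernel.π u)
      (cokernel.condition u)).2
    rw [← cancel_epi (cokernel.π u)]
    simpa using h1
  inv_hom_id := by
    have h1 := (CokernelCofork.IsColimit.desc' h.gIsCokernel (cokernel.π u)
      (cokernel.condition u)).2
    have : Epi v := h.epi_s2
    rw [← cancel_epi v]
    simp only [Cofork.π_ofπ] at h1
    rw [← Category.assoc, h1, cokernel.π_desc, Category.comp_id]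

@[simp] lemma π_cokerIso_hom {u : P ⟶ X} {v : X ⟶ L} (h : IsSES u v) :
    cokernel.π u ≫ (cokerIso h).hom = v := by
  simp [cokerIso]

/-- If `(f,g)` is a SES then the canonical map `N ≅ kernel g`. -/
def kerIso {f : N ⟶ L} {g : L ⟶ M} (h : IsSES f g) : N ≅ kernel g where
  hom := kernel.lift g f h.w
  inv := (KernelFork.IsLimit.lift' h.fIsKernel (kernel.ι g) (kernel.condition g)).1
  hom_inv_id := by
    have h1 := (KernelFork.IsLimit.lift' h.fIsKernel (kernel.ι g) (kernel.condition g)).2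
    have : Mono f := h.mono_s2
    rw [← cancel_mono f]
    simp only [Fork.ι_ofι] at h1
    simp [h1]
  inv_hom_id := by
    have h1 := (KernelFork.IsLimit.lift' h.fIsKernel (kernel.ι g) (kernel.condition g)).2
    rw [← cancel_mono (kernel.ι g)]
    simp only [Fork.ι_ofι] at h1
    simp [h1]

@[simp] lemma kerIso_hom_ι {f : N ⟶ L} {g : L ⟶ M} (h : IsSES f g) :
    (kerIso h).hom ≫ kernel.ι g = f := by
  simp [kerIso]

/-! ### Automorphism group actions and counting -/

@[simp] lemma aut_one_hom : (1 : Aut L).hom = 𝟙 L := rfl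
@[simp] lemma aut_one_inv : (1 : Aut L).inv = 𝟙 L := rfl
@[simp] lemma aut_mul_hom (a b : Aut L) : (a * b).hom = b.hom ≫ a.hom := rfl
@[simp] lemma aut_mul_inv (a b : Aut L) : (a * b).inv = a.inv ≫ b.inv := rfl

section Counting

variable [HallFinitary C]

instance homFin (X Y : C) : Finite (X ⟶ Y) := HallFinitary.homFinite X Y

instance extWFin : Finite (ExtW M N L) := Subtype.finite

instance autFin : Finite (Aut L) :=
  Finite.of_injective (fun θ : Aut L => θ.hom) fun _ _ h => Aut.ext h

instance extClassesFin : Finite (ExtClasses M N L) :=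
  Quot.finite _

instance : SMul (Aut L) (ExtW M N L) :=
  ⟨fun θ p => ⟨(p.1.1 ≫ θ.hom, θ.inv ≫ p.1.2), by
    simpa using p.2.of_iso (Iso.refl _) θ (Iso.refl _)⟩⟩

@[simp] lemma extW_smul_coe (θ : Aut L) (p : ExtW M N L) :
    (θ • p).1 = (p.1.1 ≫ θ.hom, θ.inv ≫ p.1.2) := rfl

instance : MulAction (Aut L) (ExtW M N L) where
  one_smul p := Subtype.ext (by simp)
  mul_smul a b p := Subtype.ext (by simp)

/-- The stabilizer of an extension is in bijection with `Hom(M,N)`. -/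
lemma card_stabilizer_extW (p : ExtW M N L) :
    Nat.card (MulAction.stabilizer (Aut L) p) = Nat.card (M ⟶ N) := by
  have hp := p.2
  have wfg : p.1.1 ≫ p.1.2 = 0 := hp.w
  have hmono : Mono p.1.1 := hp.mono_s2
  have hepi : Epi p.1.2 := hp.epi_s2
  symm
  apply Nat.card_eq_of_bijective
    (f := fun h : M ⟶ N =>
      (⟨⟨𝟙 L + p.1.2 ≫ h ≫ p.1.1, 𝟙 L - p.1.2 ≫ h ≫ p.1.1,
        by simp [Preadditive.comp_add, Preadditive.add_comp, Preadditive.comp_sub, Preadditive.sub_comp, reassoc_of% wfg],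
        by simp [Preadditive.comp_add, Preadditive.add_comp, Preadditive.comp_sub, Preadditive.sub_comp, reassoc_of% wfg]⟩,
        by
          refine MulAction.mem_stabilizer_iff.mpr ?_
          apply Subtype.ext
          refine Prod.ext ?_ ?_
          · show p.1.1 ≫ (𝟙 L + p.1.2 ≫ h ≫ p.1.1) = p.1.1
            simp [Preadditive.comp_add, reassoc_of% wfg]
          · show (𝟙 L - p.1.2 ≫ h ≫ p.1.1) ≫ p.1.2 = p.1.2
            simp [Preadditive.sub_comp, wfg]⟩ :
        MulAction.stabilizer (Aut L) p))
  constructor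
  · intro h₁ h₂ hin
    have heq : 𝟙 L + p.1.2 ≫ h₁ ≫ p.1.1 = 𝟙 L + p.1.2 ≫ h₂ ≫ p.1.1 :=
      congrArg (fun θ => θ.1.hom) hin
    have h3 : p.1.2 ≫ h₁ ≫ p.1.1 = p.1.2 ≫ h₂ ≫ p.1.1 := add_left_cancel heq
    rw [cancel_epi p.1.2] at h3
    rw [← cancel_mono p.1.1]
    simpa using h3
  · rintro ⟨θ, hθ⟩
    rw [MulAction.mem_stabilizer_iff] at hθ
    have h1 : p.1.1 ≫ θ.hom = p.1.1 := congrArg (fun q => q.1.1) hθ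
    have h2 : θ.inv ≫ p.1.2 = p.1.2 := congrArg (fun q => q.1.2) hθ
    have h2' : θ.hom ≫ p.1.2 = p.1.2 := by
      conv_lhs => rw [← h2]
      exact Iso.hom_inv_id_assoc θ _
    have hf0 : p.1.1 ≫ (θ.hom - 𝟙 L) = 0 := by simp [Preadditive.comp_sub, h1]
    obtain ⟨t, ht⟩ := CokernelCofork.IsColimit.desc' hp.gIsCokernel (θ.hom - 𝟙 L) hf0
    simp only [Cofork.π_ofπ] at ht
    have htg : t ≫ p.1.2 = 0 := by
      rw [← cancel_epi p.1.2, ← Category.assoc, ht]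
      simp [Preadditive.sub_comp, h2']
    obtain ⟨h, hh⟩ := KernelFork.IsLimit.lift' hp.fIsKernel t htg
    simp only [Fork.ι_ofι] at hh
    refine ⟨h, ?_⟩
    apply Subtype.ext
    apply Aut.ext
    show 𝟙 L + p.1.2 ≫ h ≫ p.1.1 = θ.hom
    rw [hh, ht]
    abel

/-- Extension classes are the orbits of the `Aut L` action. -/
def extClassesEquivOrbits :
    ExtClasses M N L ≃ MulAction.orbitRel.Quotient (Aut L) (ExtW M N L) := by
  refine Quot.congrRight fun p q => ?_
  constructor
  · rintro ⟨θ, h1, h2⟩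
    show p ∈ MulAction.orbit _ q
    rw [MulAction.mem_orbit_iff]
    refine ⟨θ.symm, Subtype.ext (Prod.ext ?_ ?_)⟩
    · show q.1.1 ≫ θ.inv = p.1.1
      simp [← h1]
    · show θ.hom ≫ q.1.2 = p.1.2
      exact h2
  · intro hq
    have hq' : p ∈ MulAction.orbit (Aut L) q := hq
    rw [MulAction.mem_orbit_iff] at hq'
    obtain ⟨θ, hθ⟩ := hq'
    have h1 : q.1.1 ≫ θ.hom = p.1.1 := congrArg (fun z => z.1.1) hθ
    have h2 : θ.inv ≫ q.1.2 = p.1.2 := congrArg (fun z => z.1.2) hθ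
    refine ⟨θ.symm, ?_, ?_⟩
    · simp [Iso.symm, ← h1]
      rw [Iso.hom_inv_id θ, Category.comp_id]
    · simp [Iso.symm, ← h2]

/-- Generic orbit-counting lemma. -/
lemma nat_card_mul_stab {G α : Type*} [Group G] [MulAction G α] [Finite α] [Finite G] {n : ℕ}
    (hst : ∀ a : α, Nat.card (MulAction.stabilizer G a) = n) :
    Nat.card α * n = Nat.card (MulAction.orbitRel.Quotient G α) * Nat.card G := by
  classical
  have key : ∀ a : α, Nat.card (MulAction.orbit G a) * n = Nat.card G := fun a => by
    rw [← hst a, Nat.card_congr (MulAction.orbitEquivQuotientStabilizer G a)]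
    exact (Subgroup.card_eq_card_quotient_mul_card_subgroup _).symm
  letI : Fintype α := Fintype.ofFinite α
  letI : Fintype (MulAction.orbitRel.Quotient G α) := Fintype.ofFinite _
  letI : ∀ ω : MulAction.orbitRel.Quotient G α, Fintype (MulAction.orbit G ω.out) :=
    fun ω => Fintype.ofFinite _
  calc Nat.card α * n
      = (∑ ω : MulAction.orbitRel.Quotient G α,
          Fintype.card (MulAction.orbit G ω.out)) * n := by
        rw [Nat.card_congr (MulAction.selfEquivSigmaOrbits G α), Nat.card_eq_fintype_card,
          Fintype.card_sigma]
    _ = ∑ ω : MulAction.orbitRel.Quotient G α,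
          (Fintype.card (MulAction.orbit G ω.out) * n) := by rw [Finset.sum_mul]
    _ = ∑ _ω : MulAction.orbitRel.Quotient G α, Nat.card G := by
        refine Finset.sum_congr rfl fun ω _ => ?_
        rw [← Nat.card_eq_fintype_card]
        exact key _
    _ = Nat.card (MulAction.orbitRel.Quotient G α) * Nat.card G := by
        rw [Finset.sum_const, Finset.card_univ, ← Nat.card_eq_fintype_card, smul_eq_mul]

lemma extW_card_mul :
    Nat.card (ExtW M N L) * Nat.card (M ⟶ N) =
      Nat.card (ExtClasses M N L) * Nat.card (Aut L) := by
  rw [Nat.card_congr (extClassesEquivOrbits (M := M) (N := N) (L := L))]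
  exact nat_card_mul_stab card_stabilizer_extW

lemma hallCoeff_eq :
    hallCoeff M N L = (Nat.card (ExtW M N L) : ℚ) / (Nat.card (Aut L) : ℚ) := by
  have h1 : (0 : ℚ) < (Nat.card (M ⟶ N) : ℚ) := by
    exact_mod_cast Nat.card_pos (α := (M ⟶ N))
  have h2 : (0 : ℚ) < (Nat.card (Aut L) : ℚ) := by
    exact_mod_cast Nat.card_pos (α := Aut L)
  rw [hallCoeff, div_eq_div_iff h1.ne' h2.ne']
  exact_mod_cast (extW_card_mul (M := M) (N := N) (L := L)).symm

/-! ### Pairs of composable short exact sequences and their orbits -/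

/-- A pair of short exact sequences `0 → N₀ → L₀ → M₀ → 0` and `0 → P₀ → X₀ → L₀ → 0`. -/
structure PairW (M₀ N₀ P₀ X₀ L₀ : C) : Type v where
  l : ExtW M₀ N₀ L₀
  r : ExtW L₀ P₀ X₀

/-- A pair of short exact sequences `0 → P₀ → L₀ → N₀ → 0` and `0 → L₀ → X₀ → M₀ → 0`. -/
structure PairW' (M₀ N₀ P₀ X₀ L₀ : C) : Type v where
  l : ExtW N₀ P₀ L₀
  r : ExtW M₀ L₀ X₀

instance : Finite (PairW M N P X L) :=
  Finite.of_injective (fun z => (z.l, z.r)) (by rintro ⟨a, b⟩ ⟨c, d⟩ h; simpa using h)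

instance : Finite (PairW' M N P X L) :=
  Finite.of_injective (fun z => (z.l, z.r)) (by rintro ⟨a, b⟩ ⟨c, d⟩ h; simpa using h)

lemma card_pairW :
    Nat.card (PairW M N P X L) = Nat.card (ExtW M N L) * Nat.card (ExtW L P X) := by
  rw [← Nat.card_prod]
  exact Nat.card_congr ⟨fun z => (z.l, z.r), fun z => ⟨z.1, z.2⟩,
    fun z => rfl, fun z => rfl⟩

lemma card_pairW' :
    Nat.card (PairW' M N P X L) = Nat.card (ExtW N P L) * Nat.card (ExtW M L X) := by
  rw [← Nat.card_prod]
  exact Nat.card_congr ⟨fun z => (z.l, z.r), fun z => ⟨z.1, z.2⟩,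
    fun z => rfl, fun z => rfl⟩

instance : SMul (Aut L) (PairW M N P X L) :=
  ⟨fun θ z => ⟨θ • z.l,
    ⟨(z.r.1.1, z.r.1.2 ≫ θ.hom), by
      simpa using z.r.2.of_iso (Iso.refl _) (Iso.refl _) θ⟩⟩⟩

@[simp] lemma pairW_smul_l (θ : Aut L) (z : PairW M N P X L) : (θ • z).l = θ • z.l := rfl
@[simp] lemma pairW_smul_r (θ : Aut L) (z : PairW M N P X L) :
    (θ • z).r.1 = (z.r.1.1, z.r.1.2 ≫ θ.hom) := rfl

instance : MulAction (Aut L) (PairW M N P X L) where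
  one_smul z := by
    cases z with
    | mk l r =>
      show PairW.mk _ _ = _
      congr 1
      · exact one_smul _ _
      · exact Subtype.ext (by simp)
  mul_smul a b z := by
    cases z with
    | mk l r =>
      show PairW.mk _ _ = PairW.mk _ _
      congr 1
      · exact mul_smul a b l
      · exact Subtype.ext (by simp)

instance : SMul (Aut L) (PairW' M N P X L) :=
  ⟨fun θ z => ⟨θ • z.l,
    ⟨(θ.inv ≫ z.r.1.1, z.r.1.2), by
      simpa using z.r.2.of_iso θ (Iso.refl _) (Iso.refl _)⟩⟩⟩

@[simp] lemma pairW'_smul_l (θ : Aut L) (z : PairW' M N P X L) : (θ • z).l = θ • z.l := rfl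
@[simp] lemma pairW'_smul_r (θ : Aut L) (z : PairW' M N P X L) :
    (θ • z).r.1 = (θ.inv ≫ z.r.1.1, z.r.1.2) := rfl

instance : MulAction (Aut L) (PairW' M N P X L) where
  one_smul z := by
    cases z with
    | mk l r =>
      show PairW'.mk _ _ = _
      congr 1
      · exact one_smul _ _
      · exact Subtype.ext (by simp)
  mul_smul a b z := by
    cases z with
    | mk l r =>
      show PairW'.mk _ _ = PairW'.mk _ _
      congr 1
      · exact mul_smul a b l
      · exact Subtype.ext (by simp)

/-- Orbits of pairs of composable short exact sequences (left association). -/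
def PairCls (M N P X L : C) := MulAction.orbitRel.Quotient (Aut L) (PairW M N P X L)

/-- Orbits of pairs of composable short exact sequences (right association). -/
def PairCls' (M N P X L : C) := MulAction.orbitRel.Quotient (Aut L) (PairW' M N P X L)

instance : Finite (PairCls M N P X L) := Quotient.finite _
instance : Finite (PairCls' M N P X L) := Quotient.finite _

lemma stab_pairW (z : PairW M N P X L) :
    Nat.card (MulAction.stabilizer (Aut L) z) = 1 := by
  rw [Nat.card_eq_one_iff_unique]
  constructor
  · constructor
    rintro ⟨a, ha⟩ ⟨b, hb⟩
    rw [MulAction.mem_stabilizer_iff] at ha hb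
    have hepi : Epi z.r.1.2 := z.r.2.epi_s2
    have ha' : z.r.1.2 ≫ a.hom = z.r.1.2 := by
      have := congrArg (fun w : PairW M N P X L => w.r.1.2) ha
      simpa using this
    have hb' : z.r.1.2 ≫ b.hom = z.r.1.2 := by
      have := congrArg (fun w : PairW M N P X L => w.r.1.2) hb
      simpa using this
    apply Subtype.ext
    apply Aut.ext
    rw [← cancel_epi z.r.1.2, ha', hb']
  · exact ⟨1, by rw [MulAction.mem_stabilizer_iff]; exact one_smul _ _⟩

lemma stab_pairW' (z : PairW' M N P X L) :
    Nat.card (MulAction.stabilizer (Aut L) z) = 1 := by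
  rw [Nat.card_eq_one_iff_unique]
  constructor
  · constructor
    rintro ⟨a, ha⟩ ⟨b, hb⟩
    rw [MulAction.mem_stabilizer_iff] at ha hb
    have hmono : Mono z.r.1.1 := z.r.2.mono_s2
    have ha' : a.inv ≫ z.r.1.1 = z.r.1.1 := by
      have := congrArg (fun w : PairW' M N P X L => w.r.1.1) ha
      simpa using this
    have hb' : b.inv ≫ z.r.1.1 = z.r.1.1 := by
      have := congrArg (fun w : PairW' M N P X L => w.r.1.1) hb
      simpa using this
    have hab : a.inv = b.inv := by
      rw [← cancel_mono z.r.1.1, ha', hb']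
    apply Subtype.ext
    apply Aut.ext
    calc a.hom = a.hom ≫ b.inv ≫ b.hom := by rw [Iso.inv_hom_id b, Category.comp_id]
    _ = a.hom ≫ a.inv ≫ b.hom := by rw [hab]
    _ = b.hom := by rw [Iso.hom_inv_id_assoc a]
  · exact ⟨1, by rw [MulAction.mem_stabilizer_iff]; exact one_smul _ _⟩

lemma pairW_count :
    Nat.card (ExtW M N L) * Nat.card (ExtW L P X) =
      Nat.card (PairCls M N P X L) * Nat.card (Aut L) := by
  rw [← card_pairW]
  simpa [PairCls] using nat_card_mul_stab (G := Aut L) (α := PairW M N P X L) stab_pairW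

lemma pairW'_count :
    Nat.card (ExtW N P L) * Nat.card (ExtW M L X) =
      Nat.card (PairCls' M N P X L) * Nat.card (Aut L) := by
  rw [← card_pairW']
  simpa [PairCls'] using nat_card_mul_stab (G := Aut L) (α := PairW' M N P X L) stab_pairW'

end Counting

/-! ### The Noether correspondence -/

section Noether

variable [HallFinitary C] {M N P X : C}

variable (M N P X)

/-- Monomorphisms `P → X` with an extension structure on the cokernel. -/
def GG := Σ u : {u : P ⟶ X // Mono u}, ExtW M N (cokernel u.1)

/-- Epimorphisms `X → M` with an extension structure on the kernel. -/
def HH := Σ p : {p : X ⟶ M // Epi p}, ExtW N P (kernel p.1)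

variable {M N P X}

instance : Finite (GG M N P X) := by
  rw [GG]; infer_instance

instance : Finite (HH M N P X) := by
  rw [HH]; infer_instance

/-- The epimorphism `X → M` associated to `u : P → X` and `g : cokernel u → M`. -/
def nfp (u : P ⟶ X) (g : cokernel u ⟶ M) : X ⟶ M := cokernel.π u ≫ g

lemma u_nfp (u : P ⟶ X) (g : cokernel u ⟶ M) : u ≫ nfp u g = 0 := by
  rw [nfp, cokernel.condition_assoc, zero_comp]

/-- The map `P → kernel (nfp u g)`. -/
def nfa (u : P ⟶ X) (g : cokernel u ⟶ M) : P ⟶ kernel (nfp u g) :=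
  kernel.lift _ u (u_nfp u g)

@[simp] lemma nfa_ι (u : P ⟶ X) (g : cokernel u ⟶ M) :
    nfa u g ≫ kernel.ι (nfp u g) = u := kernel.lift_ι _ _ _

lemma ιπ_g (u : P ⟶ X) (g : cokernel u ⟶ M) :
    (kernel.ι (nfp u g) ≫ cokernel.π u) ≫ g = 0 := by
  rw [Category.assoc, ← nfp]
  exact kernel.condition _

/-- The map `kernel (nfp u g) → N`. -/
def nfb (u : P ⟶ X) {f : N ⟶ cokernel u} {g : cokernel u ⟶ M} (hfg : IsSES f g) :
    kernel (nfp u g) ⟶ N :=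
  (KernelFork.IsLimit.lift' hfg.fIsKernel (kernel.ι (nfp u g) ≫ cokernel.π u) (ιπ_g u g)).1

lemma nfb_f (u : P ⟶ X) {f : N ⟶ cokernel u} {g : cokernel u ⟶ M} (hfg : IsSES f g) :
    nfb u hfg ≫ f = kernel.ι (nfp u g) ≫ cokernel.π u := by
  have := (KernelFork.IsLimit.lift' hfg.fIsKernel
    (kernel.ι (nfp u g) ≫ cokernel.π u) (ιπ_g u g)).2
  simpa [nfb] using this

lemma nfa_nfb (u : P ⟶ X) {f : N ⟶ cokernel u} {g : cokernel u ⟶ M} (hfg : IsSES f g) :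
    nfa u g ≫ nfb u hfg = 0 := by
  have : Mono f := hfg.mono_s2
  rw [← cancel_mono f, Category.assoc, nfb_f, zero_comp, ← Category.assoc, nfa_ι,
    cokernel.condition]

lemma mono_nfa (u : P ⟶ X) [Mono u] (g : cokernel u ⟶ M) : Mono (nfa u g) := by
  have : Mono (nfa u g ≫ kernel.ι (nfp u g)) := by rw [nfa_ι]; infer_instance
  exact mono_of_mono (nfa u g) (kernel.ι (nfp u g))

lemma epi_nfb (u : P ⟶ X) {f : N ⟶ cokernel u} {g : cokernel u ⟶ M} (hfg : IsSES f g) :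
    Epi (nfb u hfg) := by
  have hw : pullback.snd f (cokernel.π u) ≫ nfp u g = 0 := by
    rw [nfp, ← Category.assoc, ← pullback.condition, Category.assoc, hfg.w, comp_zero]
  set k : pullback f (cokernel.π u) ⟶ kernel (nfp u g) :=
    kernel.lift _ (pullback.snd f (cokernel.π u)) hw with hk
  have hmf : Mono f := hfg.mono_s2
  have hkb : k ≫ nfb u hfg = pullback.fst f (cokernel.π u) := by
    rw [← cancel_mono f, Category.assoc, nfb_f, ← Category.assoc, hk, kernel.lift_ι,
      pullback.condition]
  have : Epi (k ≫ nfb u hfg) := by rw [hkb]; infer_instance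
  exact epi_of_epi k _

def nfa_isKernel (u : P ⟶ X) [Mono u] {f : N ⟶ cokernel u} {g : cokernel u ⟶ M}
    (hfg : IsSES f g) :
    IsLimit (KernelFork.ofι (nfa u g) (nfa_nfb u hfg)) := by
  have : Mono (nfa u g) := mono_nfa u g
  apply KernelFork.IsLimit.ofι' _ _
  intro A k hk
  have hkι : (k ≫ kernel.ι (nfp u g)) ≫ cokernel.π u = 0 := by
    rw [Category.assoc, ← nfb_f u hfg, ← Category.assoc, hk, zero_comp]
  obtain ⟨s, hs⟩ := KernelFork.IsLimit.lift' (isSES_mono_cokernel u).fIsKernel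
    (k ≫ kernel.ι (nfp u g)) hkι
  simp only [Fork.ι_ofι] at hs
  refine ⟨s, ?_⟩
  rw [← cancel_mono (kernel.ι (nfp u g)), Category.assoc, nfa_ι, hs]

lemma nfSES (u : P ⟶ X) [Mono u] {f : N ⟶ cokernel u} {g : cokernel u ⟶ M}
    (hfg : IsSES f g) : IsSES (nfa u g) (nfb u hfg) := by
  have : Mono (nfa u g) := mono_nfa u g
  have : Epi (nfb u hfg) := epi_nfb u hfg
  exact isSES_of_isLimit _ (nfa_isKernel u hfg)

/-- The forward Noether map. -/
def FGH (x : GG M N P X) : HH M N P X :=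
  haveI : Mono x.1.1 := x.1.2
  haveI : Epi x.2.1.2 := x.2.2.epi_s2
  ⟨⟨nfp x.1.1 x.2.1.2, by rw [nfp]; exact epi_comp _ _⟩,
   ⟨(nfa x.1.1 x.2.1.2, nfb x.1.1 x.2.2), nfSES x.1.1 x.2.2⟩⟩

/-- The monomorphism `P → X` associated to `p : X → M` and `a : P → kernel p`. -/
def nbu (p : X ⟶ M) (a : P ⟶ kernel p) : P ⟶ X := a ≫ kernel.ι p

lemma nbu_p (p : X ⟶ M) (a : P ⟶ kernel p) : nbu p a ≫ p = 0 := by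
  rw [nbu, Category.assoc, kernel.condition, comp_zero]

/-- The map `cokernel (nbu p a) → M`. -/
def nbg (p : X ⟶ M) (a : P ⟶ kernel p) : cokernel (nbu p a) ⟶ M :=
  cokernel.desc _ p (nbu_p p a)

@[simp] lemma π_nbg (p : X ⟶ M) (a : P ⟶ kernel p) :
    cokernel.π (nbu p a) ≫ nbg p a = p := cokernel.π_desc _ _ _

lemma a_ιπ (p : X ⟶ M) (a : P ⟶ kernel p) :
    a ≫ (kernel.ι p ≫ cokernel.π (nbu p a)) = 0 := by
  rw [← Category.assoc, ← nbu, cokernel.condition]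

/-- The map `N → cokernel (nbu p a)`. -/
def nbf (p : X ⟶ M) {a : P ⟶ kernel p} {b : kernel p ⟶ N} (hab : IsSES a b) :
    N ⟶ cokernel (nbu p a) :=
  (CokernelCofork.IsColimit.desc' hab.gIsCokernel
    (kernel.ι p ≫ cokernel.π (nbu p a)) (a_ιπ p a)).1

lemma b_nbf (p : X ⟶ M) {a : P ⟶ kernel p} {b : kernel p ⟶ N} (hab : IsSES a b) :
    b ≫ nbf p hab = kernel.ι p ≫ cokernel.π (nbu p a) := by
  have := (CokernelCofork.IsColimit.desc' hab.gIsCokernel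
    (kernel.ι p ≫ cokernel.π (nbu p a)) (a_ιπ p a)).2
  simpa [nbf] using this

lemma mono_nbu (p : X ⟶ M) {a : P ⟶ kernel p} {b : kernel p ⟶ N} (hab : IsSES a b) :
    Mono (nbu p a) := by
  have : Mono a := hab.mono_s2
  rw [nbu]; exact mono_comp _ _

lemma epi_nbg (p : X ⟶ M) [Epi p] (a : P ⟶ kernel p) : Epi (nbg p a) := by
  have : Epi (cokernel.π (nbu p a) ≫ nbg p a) := by rw [π_nbg]; infer_instance
  exact epi_of_epi (cokernel.π (nbu p a)) _

lemma nbf_nbg (p : X ⟶ M) {a : P ⟶ kernel p} {b : kernel p ⟶ N} (hab : IsSES a b) :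
    nbf p hab ≫ nbg p a = 0 := by
  have : Epi b := hab.epi_s2
  rw [← cancel_epi b, ← Category.assoc, b_nbf, Category.assoc, π_nbg,
    kernel.condition, comp_zero]

lemma mono_nbf (p : X ⟶ M) {a : P ⟶ kernel p} {b : kernel p ⟶ N} (hab : IsSES a b) :
    Mono (nbf p hab) := by
  have hma : Mono a := hab.mono_s2
  have heb : Epi b := hab.epi_s2
  have hw : nbu p a ≫ pushout.inr b (kernel.ι p) = 0 := by
    rw [nbu, Category.assoc, ← pushout.condition, ← Category.assoc, hab.w, zero_comp]
  set k : cokernel (nbu p a) ⟶ pushout b (kernel.ι p) :=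
    cokernel.desc _ (pushout.inr b (kernel.ι p)) hw with hk
  have hfk : nbf p hab ≫ k = pushout.inl b (kernel.ι p) := by
    rw [← cancel_epi b, ← Category.assoc, b_nbf, Category.assoc, hk, cokernel.π_desc,
      pushout.condition]
  have : Mono (nbf p hab ≫ k) := by rw [hfk]; infer_instance
  exact mono_of_mono (nbf p hab) k

def nbg_isCokernel (p : X ⟶ M) [Epi p] {a : P ⟶ kernel p} {b : kernel p ⟶ N}
    (hab : IsSES a b) :
    IsColimit (CokernelCofork.ofπ (nbg p a) (nbf_nbg p hab)) := by
  have heb : Epi b := hab.epi_s2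
  have heg : Epi (nbg p a) := epi_nbg p a
  have hcnd : ∀ {T : C} (t : cokernel (nbu p a) ⟶ T), nbf p hab ≫ t = 0 →
      kernel.ι p ≫ cokernel.π (nbu p a) ≫ t = 0 := by
    intro T t ht
    rw [← Category.assoc, ← b_nbf p hab, Category.assoc, ht, comp_zero]
  refine CokernelCofork.IsColimit.ofπ _ _
    (fun {T} t ht => (CokernelCofork.IsColimit.desc' (isSES_kernel_epi p).gIsCokernel
      (cokernel.π (nbu p a) ≫ t) (hcnd t ht)).1)
    (fun {T} t ht => ?_) (fun {T} t ht m hm => ?_)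
  · have hs := (CokernelCofork.IsColimit.desc' (isSES_kernel_epi p).gIsCokernel
      (cokernel.π (nbu p a) ≫ t) (hcnd t ht)).2
    simp only [Cofork.π_ofπ] at hs
    rw [← cancel_epi (cokernel.π (nbu p a)), ← Category.assoc, π_nbg, hs]
  · have hs := (CokernelCofork.IsColimit.desc' (isSES_kernel_epi p).gIsCokernel
      (cokernel.π (nbu p a) ≫ t) (hcnd t ht)).2
    simp only [Cofork.π_ofπ] at hs
    rw [← cancel_epi p, hs]
    conv_lhs => rw [← π_nbg p a]
    rw [Category.assoc, hm]

lemma nbSES (p : X ⟶ M) [Epi p] {a : P ⟶ kernel p} {b : kernel p ⟶ N}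
    (hab : IsSES a b) : IsSES (nbf p hab) (nbg p a) := by
  have : Mono (nbf p hab) := mono_nbf p hab
  have : Epi (nbg p a) := epi_nbg p a
  exact isSES_of_isColimit _ (nbg_isCokernel p hab)

/-- The backward Noether map. -/
def BHG (y : HH M N P X) : GG M N P X :=
  haveI : Epi y.1.1 := y.1.2
  ⟨⟨nbu y.1.1 y.2.1.1, mono_nbu y.1.1 y.2.2⟩,
   ⟨(nbf y.1.1 y.2.2, nbg y.1.1 y.2.1.1), nbSES y.1.1 y.2.2⟩⟩

lemma FGH_injective : Function.Injective (FGH : GG M N P X → HH M N P X) := by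
  intro x y h
  have hu : x.1.1 = y.1.1 := by
    have := congrArg (fun z : HH M N P X => z.2.1.1 ≫ kernel.ι z.1.1) h
    simpa [FGH, nfa_ι] using this
  obtain ⟨⟨u1, m1⟩, ⟨⟨f1, g1⟩, h1⟩⟩ := x
  obtain ⟨⟨u2, m2⟩, ⟨⟨f2, g2⟩, h2⟩⟩ := y
  simp only at hu
  subst hu
  have hg : g1 = g2 := by
    have := congrArg (fun z : HH M N P X => z.1.1) h
    simp only [FGH, nfp] at this
    rwa [cancel_epi (cokernel.π u1)] at this
  subst hg
  have h2' := eq_of_heq (Sigma.ext_iff.mp h).2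
  have hb : nfb u1 h1 = nfb u1 h2 := congrArg (fun q => q.2) (Subtype.ext_iff.mp h2')
  have hf : f1 = f2 := by
    have heb : Epi (nfb u1 h1) := epi_nfb u1 h1
    rw [← cancel_epi (nfb u1 h1)]
    conv_rhs => rw [hb]
    rw [nfb_f, nfb_f]
  subst hf
  rfl

lemma BHG_injective : Function.Injective (BHG : HH M N P X → GG M N P X) := by
  intro x y h
  have hp : x.1.1 = y.1.1 := by
    have := congrArg (fun z : GG M N P X => cokernel.π z.1.1 ≫ z.2.1.2) h
    simpa [BHG, π_nbg] using this
  obtain ⟨⟨p1, e1⟩, ⟨⟨a1, b1⟩, h1⟩⟩ := x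
  obtain ⟨⟨p2, e2⟩, ⟨⟨a2, b2⟩, h2⟩⟩ := y
  simp only at hp
  subst hp
  have ha : a1 = a2 := by
    have := congrArg (fun z : GG M N P X => z.1.1) h
    simp only [BHG, nbu] at this
    rwa [cancel_mono (kernel.ι p1)] at this
  subst ha
  have h2' := eq_of_heq (Sigma.ext_iff.mp h).2
  have hf : nbf p1 h1 = nbf p1 h2 := congrArg (fun q => q.1) (Subtype.ext_iff.mp h2')
  have hb : b1 = b2 := by
    have hmf : Mono (nbf p1 h1) := mono_nbf p1 h1
    rw [← cancel_mono (nbf p1 h1)]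
    conv_rhs => rw [hf]
    rw [b_nbf, b_nbf]
  subst hb
  rfl

/-! ### Orbits of pairs versus the mono/epi descriptions -/

lemma v_cokerIso_inv {u : P ⟶ X} {v : X ⟶ L} (h : IsSES u v) :
    v ≫ (cokerIso h).inv = cokernel.π u := by
  rw [Iso.comp_inv_eq]
  exact (π_cokerIso_hom h).symm

lemma kerIso_inv_f {f : N ⟶ L} {g : L ⟶ M} (h : IsSES f g) :
    (kerIso h).inv ≫ f = kernel.ι g := by
  rw [Iso.inv_comp_eq]
  exact (kerIso_hom_ι h).symm

/-- A chosen isomorphism from the canonical representative of the class of `A` to `A`. -/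
def outIso (A : C) : (⟦A⟧ : IsoCls C).out ≅ A :=
  Classical.choice (Quotient.mk_out (s := isIsomorphicSetoid C) A)

/-- From a pair of composable extensions through `L` to the mono description. -/
def jfun {L : C} (z : PairW M N P X L) : GG M N P X :=
  ⟨⟨z.r.1.1, z.r.2.mono_s2⟩,
   ⟨(z.l.1.1 ≫ (cokerIso z.r.2).inv, (cokerIso z.r.2).hom ≫ z.l.1.2), by
      simpa using z.l.2.of_iso (Iso.refl _) (cokerIso z.r.2).symm (Iso.refl _)⟩⟩

lemma cokerIso_smul {L : C} (θ : Aut L) (z : PairW M N P X L) :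
    cokerIso (θ • z).r.2 = cokerIso z.r.2 ≪≫ θ := by
  apply Iso.ext
  rw [← cancel_epi (cokernel.π z.r.1.1)]
  have h1 : cokernel.π z.r.1.1 ≫ (cokerIso (θ • z).r.2).hom = z.r.1.2 ≫ θ.hom :=
    π_cokerIso_hom ((θ • z).r.2)
  rw [h1, Iso.trans_hom _ θ, ← Category.assoc, π_cokerIso_hom]

lemma jfun_resp {L : C} (θ : Aut L) (z : PairW M N P X L) : jfun (θ • z) = jfun z := by
  refine congrArg (Sigma.mk _) (Subtype.ext (Prod.ext ?_ ?_))
  · show (θ • z).l.1.1 ≫ (cokerIso (θ • z).r.2).inv = z.l.1.1 ≫ (cokerIso z.r.2).inv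
    rw [cokerIso_smul]
    simp [Iso.trans_hom _ θ, Iso.trans_inv _ θ, Iso.hom_inv_id_assoc θ]
  · show (cokerIso (θ • z).r.2).hom ≫ (θ • z).l.1.2 = (cokerIso z.r.2).hom ≫ z.l.1.2
    rw [cokerIso_smul]
    simp [Iso.trans_hom _ θ, Iso.trans_inv _ θ, Iso.hom_inv_id_assoc θ]

/-- The left-association comparison map. -/
def J1 : (Σ κ : IsoCls C, PairCls M N P X κ.out) → GG M N P X := fun s =>
  Quotient.liftOn' s.2 jfun (by
    intro z w hzw
    obtain ⟨θ, hθ⟩ := hzw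
    rw [← hθ]
    exact jfun_resp θ w)

lemma J1_injective :
    Function.Injective (J1 : (Σ κ : IsoCls C, PairCls M N P X κ.out) → GG M N P X) := by
  rintro ⟨κ1, c1⟩ ⟨κ2, c2⟩ h
  induction c1 using Quotient.inductionOn' with
  | h z =>
  induction c2 using Quotient.inductionOn' with
  | h w =>
  have hjz : jfun z = jfun w := h
  obtain ⟨⟨⟨f1, g1⟩, hl1⟩, ⟨⟨u1, v1⟩, hr1⟩⟩ := z
  obtain ⟨⟨⟨f2, g2⟩, hl2⟩, ⟨⟨u2, v2⟩, hr2⟩⟩ := w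
  have hu : u1 = u2 := congrArg (fun q : GG M N P X => q.1.1) hjz
  subst hu
  have hκ : κ1 = κ2 := by
    rw [← Quotient.out_eq κ1, ← Quotient.out_eq κ2]
    exact Quotient.sound ⟨(cokerIso hr1).symm ≪≫ cokerIso hr2⟩
  subst hκ
  refine congrArg (Sigma.mk κ1) (Quotient.sound' ?_)
  have h2' := eq_of_heq (Sigma.ext_iff.mp hjz).2
  have hf : f1 ≫ (cokerIso hr1).inv = f2 ≫ (cokerIso hr2).inv :=
    congrArg (fun q => q.1) (Subtype.ext_iff.mp h2')
  have hg : (cokerIso hr1).hom ≫ g1 = (cokerIso hr2).hom ≫ g2 :=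
    congrArg (fun q => q.2) (Subtype.ext_iff.mp h2')
  refine ⟨(cokerIso hr2).symm ≪≫ cokerIso hr1, ?_⟩
  show PairW.mk _ _ = PairW.mk _ _
  congr 1
  · apply Subtype.ext
    refine Prod.ext ?_ ?_
    · show f2 ≫ ((cokerIso hr2).symm ≪≫ cokerIso hr1).hom = f1
      have : f2 ≫ (cokerIso hr2).inv ≫ (cokerIso hr1).hom = f1 := by
        rw [← Category.assoc, ← hf, Category.assoc, Iso.inv_hom_id, Category.comp_id]
      simpa using this
    · show ((cokerIso hr2).symm ≪≫ cokerIso hr1).inv ≫ g2 = g1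
      have : (cokerIso hr1).inv ≫ (cokerIso hr2).hom ≫ g2 = g1 := by
        rw [← hg, ← Category.assoc, Iso.inv_hom_id, Category.id_comp]
      simpa using this
  · apply Subtype.ext
    refine Prod.ext rfl ?_
    show v2 ≫ ((cokerIso hr2).symm ≪≫ cokerIso hr1).hom = v1
    have : v2 ≫ (cokerIso hr2).inv ≫ (cokerIso hr1).hom = v1 := by
      rw [← Category.assoc, v_cokerIso_inv, π_cokerIso_hom]
    simpa using this

/-- From the mono description to a pair of composable extensions. -/
def kfun (x : GG M N P X) : PairW M N P X ((⟦cokernel x.1.1⟧ : IsoCls C).out) :=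
  ⟨⟨(x.2.1.1 ≫ (outIso (cokernel x.1.1)).inv, (outIso (cokernel x.1.1)).hom ≫ x.2.1.2), by
      simpa using x.2.2.of_iso (Iso.refl _) (outIso (cokernel x.1.1)).symm (Iso.refl _)⟩,
   ⟨(x.1.1, cokernel.π x.1.1 ≫ (outIso (cokernel x.1.1)).inv), by
      haveI : Mono x.1.1 := x.1.2
      simpa using (isSES_mono_cokernel x.1.1).of_iso (Iso.refl _) (Iso.refl _)
        (outIso (cokernel x.1.1)).symm⟩⟩

/-- The inverse comparison map. -/
def K1 : GG M N P X → (Σ κ : IsoCls C, PairCls M N P X κ.out) := fun x =>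
  ⟨⟦cokernel x.1.1⟧, Quotient.mk'' (kfun x)⟩

/-- Extracting the monomorphism from a class. -/
def Ufun : (Σ κ : IsoCls C, PairCls M N P X κ.out) → (P ⟶ X) := fun s =>
  Quotient.liftOn' s.2 (fun z => z.r.1.1) (by
    intro z w hzw
    obtain ⟨θ, hθ⟩ := hzw
    rw [← hθ]
    rfl)

lemma K1_injective :
    Function.Injective (K1 : GG M N P X → Σ κ : IsoCls C, PairCls M N P X κ.out) := by
  intro x y h
  have hu : x.1.1 = y.1.1 := congrArg Ufun h
  obtain ⟨⟨u1, m1⟩, ⟨⟨f1, g1⟩, h1⟩⟩ := x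
  obtain ⟨⟨u2, m2⟩, ⟨⟨f2, g2⟩, h2⟩⟩ := y
  simp only at hu
  subst hu
  have h2' : (Quotient.mk'' (kfun ⟨⟨u1, m1⟩, ⟨(f1, g1), h1⟩⟩) :
      PairCls M N P X ((⟦cokernel u1⟧ : IsoCls C).out)) = Quotient.mk'' (kfun ⟨⟨u1, m2⟩, ⟨(f2, g2), h2⟩⟩) :=
    eq_of_heq (Sigma.ext_iff.mp h).2
  have hrel := Quotient.exact' h2'
  obtain ⟨θ, hθ⟩ := hrel
  set e := outIso (cokernel u1) with he
  have hv : (cokernel.π u1 ≫ e.inv) ≫ θ.hom = cokernel.π u1 ≫ e.inv := by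
    have := congrArg (fun q : PairW M N P X ((⟦cokernel u1⟧ : IsoCls C).out) => q.r.1.2) hθ
    simpa [kfun] using this
  have hθ1 : θ.hom = 𝟙 _ := by
    rw [Category.assoc] at hv
    rw [cancel_epi (cokernel.π u1)] at hv
    rw [← cancel_epi e.inv, hv, Category.comp_id]
  have hθ2 : θ.inv = 𝟙 _ := by
    haveI : IsIso θ.hom := ⟨⟨θ.inv, Iso.hom_inv_id θ, Iso.inv_hom_id θ⟩⟩
    rw [← cancel_mono θ.hom, Iso.inv_hom_id θ, hθ1, Category.comp_id]
  have hff : (f2 ≫ e.inv) ≫ θ.hom = f1 ≫ e.inv := by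
    have := congrArg (fun q : PairW M N P X ((⟦cokernel u1⟧ : IsoCls C).out) => q.l.1.1) hθ
    exact this
  have hgg : θ.inv ≫ (e.hom ≫ g2) = e.hom ≫ g1 := by
    have := congrArg (fun q : PairW M N P X ((⟦cokernel u1⟧ : IsoCls C).out) => q.l.1.2) hθ
    exact this
  rw [hθ1, Category.comp_id, cancel_mono e.inv] at hff
  rw [hθ2, Category.id_comp, cancel_epi e.hom] at hgg
  subst hff
  subst hgg
  rfl

/-- From a pair of composable extensions through `L` to the epi description. -/
def jfun' {L : C} (z : PairW' M N P X L) : HH M N P X :=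
  ⟨⟨z.r.1.2, z.r.2.epi_s2⟩,
   ⟨(z.l.1.1 ≫ (kerIso z.r.2).hom, (kerIso z.r.2).inv ≫ z.l.1.2), by
      simpa using z.l.2.of_iso (Iso.refl _) (kerIso z.r.2) (Iso.refl _)⟩⟩

lemma kerIso_smul {L : C} (θ : Aut L) (z : PairW' M N P X L) :
    kerIso (θ • z).r.2 = θ.symm ≪≫ kerIso z.r.2 := by
  apply Iso.ext
  rw [← cancel_mono (kernel.ι z.r.1.2)]
  have h1 : (kerIso (θ • z).r.2).hom ≫ kernel.ι z.r.1.2 = θ.inv ≫ z.r.1.1 :=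
    kerIso_hom_ι ((θ • z).r.2)
  rw [h1, Iso.trans_hom, Category.assoc, kerIso_hom_ι]
  rfl

lemma jfun'_resp {L : C} (θ : Aut L) (z : PairW' M N P X L) : jfun' (θ • z) = jfun' z := by
  refine congrArg (Sigma.mk _) (Subtype.ext (Prod.ext ?_ ?_))
  · show (θ • z).l.1.1 ≫ (kerIso (θ • z).r.2).hom = z.l.1.1 ≫ (kerIso z.r.2).hom
    rw [kerIso_smul]
    simp [Iso.symm_hom θ, Iso.symm_inv θ, Iso.hom_inv_id_assoc θ, Iso.inv_hom_id_assoc θ]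
  · show (kerIso (θ • z).r.2).inv ≫ (θ • z).l.1.2 = (kerIso z.r.2).inv ≫ z.l.1.2
    rw [kerIso_smul]
    simp [Iso.symm_hom θ, Iso.symm_inv θ, Iso.hom_inv_id_assoc θ, Iso.inv_hom_id_assoc θ]

/-- The right-association comparison map. -/
def J2 : (Σ κ : IsoCls C, PairCls' M N P X κ.out) → HH M N P X := fun s =>
  Quotient.liftOn' s.2 jfun' (by
    intro z w hzw
    obtain ⟨θ, hθ⟩ := hzw
    rw [← hθ]
    exact jfun'_resp θ w)

lemma J2_injective :
    Function.Injective (J2 : (Σ κ : IsoCls C, PairCls' M N P X κ.out) → HH M N P X) := by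
  rintro ⟨κ1, c1⟩ ⟨κ2, c2⟩ h
  induction c1 using Quotient.inductionOn' with
  | h z =>
  induction c2 using Quotient.inductionOn' with
  | h w =>
  have hjz : jfun' z = jfun' w := h
  obtain ⟨⟨⟨a1, b1⟩, hl1⟩, ⟨⟨c1, d1⟩, hr1⟩⟩ := z
  obtain ⟨⟨⟨a2, b2⟩, hl2⟩, ⟨⟨c2, d2⟩, hr2⟩⟩ := w
  have hd : d1 = d2 := congrArg (fun q : HH M N P X => q.1.1) hjz
  subst hd
  have hκ : κ1 = κ2 := by
    rw [← Quotient.out_eq κ1, ← Quotient.out_eq κ2]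
    exact Quotient.sound ⟨kerIso hr1 ≪≫ (kerIso hr2).symm⟩
  subst hκ
  refine congrArg (Sigma.mk κ1) (Quotient.sound' ?_)
  have h2' := eq_of_heq (Sigma.ext_iff.mp hjz).2
  have ha : a1 ≫ (kerIso hr1).hom = a2 ≫ (kerIso hr2).hom :=
    congrArg (fun q => q.1) (Subtype.ext_iff.mp h2')
  have hb : (kerIso hr1).inv ≫ b1 = (kerIso hr2).inv ≫ b2 :=
    congrArg (fun q => q.2) (Subtype.ext_iff.mp h2')
  refine ⟨kerIso hr2 ≪≫ (kerIso hr1).symm, ?_⟩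
  show PairW'.mk _ _ = PairW'.mk _ _
  congr 1
  · apply Subtype.ext
    refine Prod.ext ?_ ?_
    · show a2 ≫ (kerIso hr2 ≪≫ (kerIso hr1).symm).hom = a1
      have : a2 ≫ (kerIso hr2).hom ≫ (kerIso hr1).inv = a1 := by
        rw [← Category.assoc, ← ha, Category.assoc, Iso.hom_inv_id, Category.comp_id]
      simpa using this
    · show (kerIso hr2 ≪≫ (kerIso hr1).symm).inv ≫ b2 = b1
      have : (kerIso hr1).hom ≫ (kerIso hr2).inv ≫ b2 = b1 := by
        rw [← hb, ← Category.assoc, Iso.hom_inv_id, Category.id_comp]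
      simpa using this
  · apply Subtype.ext
    refine Prod.ext ?_ rfl
    show (kerIso hr2 ≪≫ (kerIso hr1).symm).inv ≫ c2 = c1
    have : (kerIso hr1).hom ≫ (kerIso hr2).inv ≫ c2 = c1 := by
      rw [kerIso_inv_f hr2, kerIso_hom_ι hr1]
    simpa using this

/-- From the epi description to a pair of composable extensions. -/
def kfun' (y : HH M N P X) : PairW' M N P X ((⟦kernel y.1.1⟧ : IsoCls C).out) :=
  ⟨⟨(y.2.1.1 ≫ (outIso (kernel y.1.1)).inv, (outIso (kernel y.1.1)).hom ≫ y.2.1.2), by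
      simpa using y.2.2.of_iso (Iso.refl _) (outIso (kernel y.1.1)).symm (Iso.refl _)⟩,
   ⟨((outIso (kernel y.1.1)).hom ≫ kernel.ι y.1.1, y.1.1), by
      haveI : Epi y.1.1 := y.1.2
      simpa using (isSES_kernel_epi y.1.1).of_iso (outIso (kernel y.1.1)).symm
        (Iso.refl _) (Iso.refl _)⟩⟩

/-- The inverse comparison map. -/
def K2 : HH M N P X → (Σ κ : IsoCls C, PairCls' M N P X κ.out) := fun y =>
  ⟨⟦kernel y.1.1⟧, Quotient.mk'' (kfun' y)⟩

/-- Extracting the epimorphism from a class. -/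
def Dfun : (Σ κ : IsoCls C, PairCls' M N P X κ.out) → (X ⟶ M) := fun s =>
  Quotient.liftOn' s.2 (fun z => z.r.1.2) (by
    intro z w hzw
    obtain ⟨θ, hθ⟩ := hzw
    rw [← hθ]
    rfl)

lemma K2_injective :
    Function.Injective (K2 : HH M N P X → Σ κ : IsoCls C, PairCls' M N P X κ.out) := by
  intro x y h
  have hp : x.1.1 = y.1.1 := congrArg Dfun h
  obtain ⟨⟨p1, e1⟩, ⟨⟨a1, b1⟩, h1⟩⟩ := x
  obtain ⟨⟨p2, e2⟩, ⟨⟨a2, b2⟩, h2⟩⟩ := y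
  simp only at hp
  subst hp
  have h2' : (Quotient.mk'' (kfun' ⟨⟨p1, e1⟩, ⟨(a1, b1), h1⟩⟩) :
      PairCls' M N P X ((⟦kernel p1⟧ : IsoCls C).out)) =
      Quotient.mk'' (kfun' ⟨⟨p1, e2⟩, ⟨(a2, b2), h2⟩⟩) :=
    eq_of_heq (Sigma.ext_iff.mp h).2
  obtain ⟨θ, hθ⟩ := Quotient.exact' h2'
  set e := outIso (kernel p1) with he
  have hc : θ.inv ≫ ((e.hom ≫ kernel.ι p1)) = e.hom ≫ kernel.ι p1 := by
    have := congrArg (fun q : PairW' M N P X ((⟦kernel p1⟧ : IsoCls C).out) => q.r.1.1) hθ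
    simpa [kfun'] using this
  have hθ2 : θ.inv = 𝟙 _ := by
    rw [← Category.assoc] at hc
    rw [← cancel_mono (e.hom ≫ kernel.ι p1), Category.id_comp, ← Category.assoc, hc]
  have hθ1 : θ.hom = 𝟙 _ := by
    haveI : IsIso θ.inv := ⟨⟨θ.hom, Iso.inv_hom_id θ, Iso.hom_inv_id θ⟩⟩
    rw [← cancel_epi θ.inv, Iso.inv_hom_id θ, hθ2, Category.comp_id]
  have haa : (a2 ≫ e.inv) ≫ θ.hom = a1 ≫ e.inv := by
    have := congrArg (fun q : PairW' M N P X ((⟦kernel p1⟧ : IsoCls C).out) => q.l.1.1) hθ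
    exact this
  have hbb : θ.inv ≫ (e.hom ≫ b2) = e.hom ≫ b1 := by
    have := congrArg (fun q : PairW' M N P X ((⟦kernel p1⟧ : IsoCls C).out) => q.l.1.2) hθ
    exact this
  rw [hθ1, Category.comp_id, cancel_mono e.inv] at haa
  rw [hθ2, Category.id_comp, cancel_epi e.hom] at hbb
  subst haa
  subst hbb
  rfl

instance : Finite (Σ κ : IsoCls C, PairCls M N P X κ.out) :=
  Finite.of_injective _ (J1_injective (M := M) (N := N) (P := P) (X := X))

instance : Finite (Σ κ : IsoCls C, PairCls' M N P X κ.out) :=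
  Finite.of_injective _ (J2_injective (M := M) (N := N) (P := P) (X := X))

lemma card_left_eq :
    Nat.card (Σ κ : IsoCls C, PairCls M N P X κ.out) = Nat.card (GG M N P X) :=
  le_antisymm (Nat.card_le_card_of_injective _ J1_injective)
    (Nat.card_le_card_of_injective _ K1_injective)

lemma card_GG_HH : Nat.card (GG M N P X) = Nat.card (HH M N P X) :=
  le_antisymm (Nat.card_le_card_of_injective _ FGH_injective)
    (Nat.card_le_card_of_injective _ BHG_injective)

lemma card_right_eq :
    Nat.card (Σ κ : IsoCls C, PairCls' M N P X κ.out) = Nat.card (HH M N P X) :=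
  le_antisymm (Nat.card_le_card_of_injective _ J2_injective)
    (Nat.card_le_card_of_injective _ K2_injective)

lemma card_sigma_pairCls_eq :
    Nat.card (Σ κ : IsoCls C, PairCls M N P X κ.out) =
      Nat.card (Σ κ : IsoCls C, PairCls' M N P X κ.out) := by
  rw [card_left_eq, card_GG_HH, ← card_right_eq]

end Noether

/-! ### The core associativity identity -/

section Core

variable [HallFinitary C]

lemma isEmpty_extW_of_coeff_zero {M N : C} {L : C} (h : hallCoeff M N L = 0) :
    IsEmpty (ExtW M N L) := by
  have hd : (0 : ℚ) < (Nat.card (M ⟶ N) : ℚ) := by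
    exact_mod_cast Nat.card_pos (α := (M ⟶ N))
  rw [hallCoeff, div_eq_zero_iff] at h
  rcases h with h | h
  · have : Nat.card (ExtClasses M N L) = 0 := by exact_mod_cast h
    rw [Nat.card_eq_zero] at this
    rcases this with hE | hI
    · exact ⟨fun w => hE.false (Quot.mk _ w)⟩
    · exact absurd hI (not_infinite_iff_finite.mpr inferInstance)
  · exact absurd h hd.ne'

lemma isEmpty_pairCls_of_coeff_zero {M N P X : C} {κ : IsoCls C}
    (h : hallCoeff M N κ.out = 0) : IsEmpty (PairCls M N P X κ.out) := by
  have h1 : IsEmpty (ExtW M N κ.out) := isEmpty_extW_of_coeff_zero h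
  have h2 : IsEmpty (PairW M N P X κ.out) := ⟨fun z => h1.false z.l⟩
  exact ⟨fun c => Quotient.inductionOn' c fun z => h2.false z⟩

lemma isEmpty_pairCls'_of_coeff_zero {M N P X : C} {κ : IsoCls C}
    (h : hallCoeff N P κ.out = 0) : IsEmpty (PairCls' M N P X κ.out) := by
  have h1 : IsEmpty (ExtW N P κ.out) := isEmpty_extW_of_coeff_zero h
  have h2 : IsEmpty (PairW' M N P X κ.out) := ⟨fun z => h1.false z.l⟩
  exact ⟨fun c => Quotient.inductionOn' c fun z => h2.false z⟩

lemma term_left {M N P X : C} (κ : IsoCls C) :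
    hallCoeff M N κ.out * hallCoeff κ.out P X =
      (Nat.card (PairCls M N P X κ.out) : ℚ) / (Nat.card (Aut X) : ℚ) := by
  have hL : (0 : ℚ) < (Nat.card (Aut κ.out) : ℚ) := by
    exact_mod_cast Nat.card_pos (α := Aut κ.out)
  have hc : (Nat.card (ExtW M N κ.out) : ℚ) * (Nat.card (ExtW κ.out P X) : ℚ) =
      (Nat.card (PairCls M N P X κ.out) : ℚ) * (Nat.card (Aut κ.out) : ℚ) := by
    exact_mod_cast pairW_count (M := M) (N := N) (P := P) (X := X) (L := κ.out)
  rw [hallCoeff_eq, hallCoeff_eq, div_mul_div_comm, hc, mul_comm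
    ((Nat.card (PairCls M N P X κ.out) : ℚ)) _, mul_div_mul_left _ _ hL.ne']

lemma term_right {M N P X : C} (κ : IsoCls C) :
    hallCoeff N P κ.out * hallCoeff M κ.out X =
      (Nat.card (PairCls' M N P X κ.out) : ℚ) / (Nat.card (Aut X) : ℚ) := by
  have hL : (0 : ℚ) < (Nat.card (Aut κ.out) : ℚ) := by
    exact_mod_cast Nat.card_pos (α := Aut κ.out)
  have hc : (Nat.card (ExtW N P κ.out) : ℚ) * (Nat.card (ExtW M κ.out X) : ℚ) =
      (Nat.card (PairCls' M N P X κ.out) : ℚ) * (Nat.card (Aut κ.out) : ℚ) := by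
    exact_mod_cast pairW'_count (M := M) (N := N) (P := P) (X := X) (L := κ.out)
  rw [hallCoeff_eq, hallCoeff_eq, div_mul_div_comm, hc, mul_comm
    ((Nat.card (PairCls' M N P X κ.out) : ℚ)) _, mul_div_mul_left _ _ hL.ne']

lemma sum_card_eq {F : IsoCls C → Type v} [∀ κ, Finite (F κ)] [Finite (Σ κ, F κ)]
    (T : Finset (IsoCls C)) (hT : ∀ κ ∉ T, IsEmpty (F κ)) :
    ∑ κ ∈ T, Nat.card (F κ) = Nat.card (Σ κ, F κ) := by
  classical
  have e := Equiv.sigmaSubtypeEquivOfSubset F (fun κ => κ ∈ T)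
    (fun κ hκ => by by_contra hmem; exact (hT κ hmem).false hκ)
  rw [← Nat.card_congr e]
  letI : ∀ κ : {κ // κ ∈ T}, Fintype (F κ) := fun κ => Fintype.ofFinite _
  rw [Nat.card_eq_fintype_card, Fintype.card_sigma, ← Finset.sum_coe_sort T]
  exact Finset.sum_congr rfl fun κ _ => Nat.card_eq_fintype_card

lemma core_assoc (M N P X : C) :
    ∑ κ ∈ (HallFinitary.suppFinite M N).toFinset,
        hallCoeff M N κ.out * hallCoeff κ.out P X =
      ∑ κ ∈ (HallFinitary.suppFinite N P).toFinset,
        hallCoeff N P κ.out * hallCoeff M κ.out X := by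
  have h1 : ∀ κ ∉ (HallFinitary.suppFinite M N).toFinset,
      IsEmpty (PairCls M N P X κ.out) := by
    intro κ hκ
    rw [Set.Finite.mem_toFinset, Set.mem_setOf_eq, not_not] at hκ
    exact isEmpty_pairCls_of_coeff_zero hκ
  have h2 : ∀ κ ∉ (HallFinitary.suppFinite N P).toFinset,
      IsEmpty (PairCls' M N P X κ.out) := by
    intro κ hκ
    rw [Set.Finite.mem_toFinset, Set.mem_setOf_eq, not_not] at hκ
    exact isEmpty_pairCls'_of_coeff_zero hκ
  calc ∑ κ ∈ (HallFinitary.suppFinite M N).toFinset,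
        hallCoeff M N κ.out * hallCoeff κ.out P X
      = ∑ κ ∈ (HallFinitary.suppFinite M N).toFinset,
          (Nat.card (PairCls M N P X κ.out) : ℚ) / (Nat.card (Aut X) : ℚ) :=
        Finset.sum_congr rfl fun κ _ => term_left κ
    _ = (∑ κ ∈ (HallFinitary.suppFinite M N).toFinset,
          (Nat.card (PairCls M N P X κ.out) : ℚ)) / (Nat.card (Aut X) : ℚ) := by
        rw [Finset.sum_div]
    _ = ((Nat.card (Σ κ : IsoCls C, PairCls M N P X κ.out) : ℚ)) /
          (Nat.card (Aut X) : ℚ) := by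
        rw [← sum_card_eq _ h1]
        push_cast
        rfl
    _ = ((Nat.card (Σ κ : IsoCls C, PairCls' M N P X κ.out) : ℚ)) /
          (Nat.card (Aut X) : ℚ) := by
        rw [card_sigma_pairCls_eq]
    _ = (∑ κ ∈ (HallFinitary.suppFinite N P).toFinset,
          (Nat.card (PairCls' M N P X κ.out) : ℚ)) / (Nat.card (Aut X) : ℚ) := by
        rw [← sum_card_eq _ h2]
        push_cast
        rfl
    _ = ∑ κ ∈ (HallFinitary.suppFinite N P).toFinset,
          (Nat.card (PairCls' M N P X κ.out) : ℚ) / (Nat.card (Aut X) : ℚ) := by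
        rw [Finset.sum_div]
    _ = ∑ κ ∈ (HallFinitary.suppFinite N P).toFinset,
          hallCoeff N P κ.out * hallCoeff M κ.out X :=
        Finset.sum_congr rfl fun κ _ => (term_right κ).symm

end Core

/-! ### Algebraic properties of the Hall multiplication -/

section Algebra

variable [HallFinitary C]

lemma hallMulBasis_apply (M N : C) (κ : IsoCls C) :
    hallMulBasis M N κ = hallCoeff M N κ.out := rfl

lemma hallMul_zero_left (y : HallAlg C) : hallMul 0 y = 0 :=
  Finsupp.sum_zero_index

lemma hallMul_zero_right (x : HallAlg C) : hallMul x 0 = 0 := by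
  simp [hallMul, Finsupp.sum_zero_index]

lemma hallMul_single_left (κ : IsoCls C) (a : ℚ) (y : HallAlg C) :
    hallMul (Finsupp.single κ a) y =
      y.sum fun κ' b => (a * b) • hallMulBasis κ.out κ'.out := by
  rw [hallMul]
  exact Finsupp.sum_single_index (by simp)

lemma hallMul_single_right (x : HallAlg C) (κ : IsoCls C) (b : ℚ) :
    hallMul x (Finsupp.single κ b) =
      x.sum fun κ' a => (a * b) • hallMulBasis κ'.out κ.out := by
  rw [hallMul]
  exact Finsupp.sum_congr fun κ' _ => Finsupp.sum_single_index (by simp)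

lemma hallMul_add_left (x₁ x₂ y : HallAlg C) :
    hallMul (x₁ + x₂) y = hallMul x₁ y + hallMul x₂ y := by
  rw [hallMul, hallMul, hallMul]
  refine Finsupp.sum_add_index' (fun κ => by simp) ?_
  intro κ a₁ a₂
  rw [← Finsupp.sum_add]
  exact Finsupp.sum_congr fun κ' _ => by rw [add_mul, add_smul]

lemma hallMul_add_right (x y₁ y₂ : HallAlg C) :
    hallMul x (y₁ + y₂) = hallMul x y₁ + hallMul x y₂ := by
  rw [hallMul, hallMul, hallMul, ← Finsupp.sum_add]
  exact Finsupp.sum_congr fun κ _ =>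
    Finsupp.sum_add_index' (fun κ' => by simp) (fun κ' b₁ b₂ => by rw [mul_add, add_smul])

lemma hallMul_smul_left (c : ℚ) (x y : HallAlg C) :
    hallMul (c • x) y = c • hallMul x y := by
  rw [hallMul, hallMul, Finsupp.sum_smul_index (fun κ => by simp), Finsupp.smul_sum]
  refine Finsupp.sum_congr fun κ _ => ?_
  rw [Finsupp.smul_sum]
  exact Finsupp.sum_congr fun κ' _ => by rw [smul_smul, mul_assoc]

lemma hallMul_smul_right (c : ℚ) (x y : HallAlg C) :
    hallMul x (c • y) = c • hallMul x y := by
  rw [hallMul, hallMul, Finsupp.smul_sum]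
  refine Finsupp.sum_congr fun κ a => ?_
  rw [Finsupp.sum_smul_index (fun κ' => by simp), Finsupp.smul_sum]
  refine Finsupp.sum_congr fun κ' b => ?_
  rw [smul_smul]
  congr 1
  ring

lemma hallMul_single_single (α β : IsoCls C) (a b : ℚ) :
    hallMul (Finsupp.single α a) (Finsupp.single β b) =
      (a * b) • hallMulBasis α.out β.out := by
  rw [hallMul_single_left]
  exact Finsupp.sum_single_index (by simp)

lemma key_assoc (α β γ : IsoCls C) :
    hallMul (hallMulBasis α.out β.out) (Finsupp.single γ 1) =
      hallMul (Finsupp.single α 1) (hallMulBasis β.out γ.out) := by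
  ext ξ
  rw [hallMul_single_right, hallMul_single_left, Finsupp.sum_apply, Finsupp.sum_apply]
  have hl : ((hallMulBasis α.out β.out).sum fun κ' a =>
      ((a * 1) • hallMulBasis κ'.out γ.out) ξ) =
      ∑ κ ∈ (HallFinitary.suppFinite α.out β.out).toFinset,
        hallCoeff α.out β.out κ.out * hallCoeff κ.out γ.out ξ.out := by
    rw [Finsupp.sum]
    exact Finset.sum_congr rfl fun κ _ => by
      rw [Finsupp.smul_apply, smul_eq_mul, mul_one, hallMulBasis_apply, hallMulBasis_apply]
  have hr : ((hallMulBasis β.out γ.out).sum fun κ' b =>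
      ((1 * b) • hallMulBasis α.out κ'.out) ξ) =
      ∑ κ ∈ (HallFinitary.suppFinite β.out γ.out).toFinset,
        hallCoeff β.out γ.out κ.out * hallCoeff α.out κ.out ξ.out := by
    rw [Finsupp.sum]
    exact Finset.sum_congr rfl fun κ _ => by
      rw [Finsupp.smul_apply, smul_eq_mul, one_mul, hallMulBasis_apply, hallMulBasis_apply]
  rw [hl, hr]
  exact core_assoc α.out β.out γ.out ξ.out

lemma assoc_single (α β γ : IsoCls C) (a b c : ℚ) :
    hallMul (hallMul (Finsupp.single α a) (Finsupp.single β b)) (Finsupp.single γ c) =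
      hallMul (Finsupp.single α a) (hallMul (Finsupp.single β b) (Finsupp.single γ c)) := by
  rw [hallMul_single_single, hallMul_single_single, hallMul_smul_left, hallMul_smul_right]
  have h1 : hallMul (hallMulBasis α.out β.out) (Finsupp.single γ c) =
      c • hallMul (hallMulBasis α.out β.out) (Finsupp.single γ 1) := by
    rw [← hallMul_smul_right, Finsupp.smul_single, smul_eq_mul, mul_one]
  have h2 : hallMul (Finsupp.single α a) (hallMulBasis β.out γ.out) =
      a • hallMul (Finsupp.single α 1) (hallMulBasis β.out γ.out) := by
    rw [← hallMul_smul_left, Finsupp.smul_single, smul_eq_mul, mul_one]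
  rw [h1, h2, key_assoc, smul_smul, smul_smul]
  congr 1
  ring

theorem hallMul_assoc (x y z : HallAlg C) :
    hallMul (hallMul x y) z = hallMul x (hallMul y z) := by
  induction x using Finsupp.induction_linear with
  | zero => simp [hallMul_zero_left]
  | add x₁ x₂ h₁ h₂ => simp [hallMul_add_left, h₁, h₂]
  | single α a =>
    induction y using Finsupp.induction_linear with
    | zero => simp [hallMul_zero_left, hallMul_zero_right]
    | add y₁ y₂ h₁ h₂ => simp [hallMul_add_left, hallMul_add_right, h₁, h₂]
    | single β b =>
      induction z using Finsupp.induction_linear with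
      | zero => simp [hallMul_zero_right]
      | add z₁ z₂ h₁ h₂ => simp [hallMul_add_right, h₁, h₂]
      | single γ c => exact assoc_single α β γ a b c

end Algebra

/-! ### The unit -/

section Unit

variable [HallFinitary C]

lemma epi_to_zero {L Z : C} (hZ : IsZero Z) (g : L ⟶ Z) : Epi g :=
  ⟨fun u v _ => hZ.eq_of_src u v⟩

lemma mono_from_zero {Z L : C} (hZ : IsZero Z) (f : Z ⟶ L) : Mono f :=
  ⟨fun u v _ => hZ.eq_of_tgt u v⟩

lemma isSES_of_isIso_left {Z N L : C} (hZ : IsZero Z) (f : N ⟶ L) [IsIso f] (g : L ⟶ Z) :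
    IsSES f g := by
  have w : f ≫ g = 0 := hZ.eq_of_tgt _ _
  have : Epi g := epi_to_zero hZ g
  refine isSES_of_isLimit w (KernelFork.IsLimit.ofι' f w fun {A} k hk => ⟨k ≫ inv f, by simp⟩)

lemma isSES_of_isIso_right {Z L M : C} (hZ : IsZero Z) (f : Z ⟶ L) (g : L ⟶ M) [IsIso g] :
    IsSES f g := by
  have w : f ≫ g = 0 := by
    have : f = 0 := hZ.eq_of_src _ _
    rw [this, zero_comp]
  have : Mono f := mono_from_zero hZ f
  refine isSES_of_isColimit w (CokernelCofork.IsColimit.ofπ _ w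
    (fun {T} k hk => inv g ≫ k) (fun {T} k hk => by simp) (fun {T} k hk m hm => by
      show m = inv g ≫ k
      rw [← cancel_epi g, hm, ← Category.assoc, IsIso.hom_inv_id, Category.id_comp]))

lemma extW_isIso_f {Z N L : C} (hZ : IsZero Z) (w : ExtW Z N L) : IsIso w.1.1 := by
  obtain ⟨wz, hse⟩ := w.2
  exact hse.isIso_f_iff.mpr hZ

lemma extW_isIso_g {Z M L : C} (hZ : IsZero Z) (w : ExtW M Z L) : IsIso w.1.2 := by
  obtain ⟨wz, hse⟩ := w.2
  exact hse.isIso_g_iff.mpr hZ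

lemma hallMulBasis_zero_left {Z : C} (hZ : IsZero Z) (N : C) :
    hallMulBasis Z N = Finsupp.single ⟦N⟧ 1 := by
  ext κ
  rw [hallMulBasis_apply, Finsupp.single_apply, hallCoeff]
  have hhom : Nat.card (Z ⟶ N) = 1 := by
    rw [Nat.card_eq_one_iff_unique]
    exact ⟨⟨fun u v => hZ.eq_of_src u v⟩, ⟨0⟩⟩
  by_cases hκ : (⟦N⟧ : IsoCls C) = κ
  · rw [if_pos hκ, hhom]
    have e : N ≅ κ.out := by
      rw [← hκ]
      exact (outIso N).symm
    have hcard : Nat.card (ExtClasses Z N κ.out) = 1 := by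
      rw [Nat.card_eq_one_iff_unique]
      constructor
      · constructor
        intro c₁ c₂
        induction c₁ using Quot.inductionOn with
        | h w₁ =>
        induction c₂ using Quot.inductionOn with
        | h w₂ =>
        have hf₁ : IsIso w₁.1.1 := extW_isIso_f hZ w₁
        have hf₂ : IsIso w₂.1.1 := extW_isIso_f hZ w₂
        apply Quot.sound
        refine ⟨(asIso w₁.1.1).symm ≪≫ asIso w₂.1.1, ?_, hZ.eq_of_tgt _ _⟩
        simp
      · refine ⟨Quot.mk _ ⟨(e.hom, 0), ?_⟩⟩
        exact isSES_of_isIso_left hZ e.hom 0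
    rw [hcard]
    norm_num
  · rw [if_neg hκ]
    have hempty : IsEmpty (ExtW Z N κ.out) := by
      constructor
      intro w
      have hf : IsIso w.1.1 := extW_isIso_f hZ w
      apply hκ
      rw [← Quotient.out_eq κ]
      exact Quotient.sound ⟨asIso w.1.1⟩
    have : IsEmpty (ExtClasses Z N κ.out) := ⟨fun c => Quot.inductionOn c hempty.false⟩
    rw [Nat.card_of_isEmpty, Nat.cast_zero, zero_div]

lemma hallMulBasis_zero_right {Z : C} (hZ : IsZero Z) (M : C) :
    hallMulBasis M Z = Finsupp.single ⟦M⟧ 1 := by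
  ext κ
  rw [hallMulBasis_apply, Finsupp.single_apply, hallCoeff]
  have hhom : Nat.card (M ⟶ Z) = 1 := by
    rw [Nat.card_eq_one_iff_unique]
    exact ⟨⟨fun u v => hZ.eq_of_tgt u v⟩, ⟨0⟩⟩
  by_cases hκ : (⟦M⟧ : IsoCls C) = κ
  · rw [if_pos hκ, hhom]
    have e : κ.out ≅ M := by
      rw [← hκ]
      exact outIso M
    have hcard : Nat.card (ExtClasses M Z κ.out) = 1 := by
      rw [Nat.card_eq_one_iff_unique]
      constructor
      · constructor
        intro c₁ c₂
        induction c₁ using Quot.inductionOn with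
        | h w₁ =>
        induction c₂ using Quot.inductionOn with
        | h w₂ =>
        have hg₁ : IsIso w₁.1.2 := extW_isIso_g hZ w₁
        have hg₂ : IsIso w₂.1.2 := extW_isIso_g hZ w₂
        apply Quot.sound
        refine ⟨asIso w₁.1.2 ≪≫ (asIso w₂.1.2).symm, hZ.eq_of_src _ _, ?_⟩
        simp
      · refine ⟨Quot.mk _ ⟨(0, e.hom), ?_⟩⟩
        exact isSES_of_isIso_right hZ 0 e.hom
    rw [hcard]
    norm_num
  · rw [if_neg hκ]
    have hempty : IsEmpty (ExtW M Z κ.out) := by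
      constructor
      intro w
      have hg : IsIso w.1.2 := extW_isIso_g hZ w
      apply hκ
      rw [← Quotient.out_eq κ]
      exact Quotient.sound ⟨(asIso w.1.2).symm⟩
    have : IsEmpty (ExtClasses M Z κ.out) := ⟨fun c => Quot.inductionOn c hempty.false⟩
    rw [Nat.card_of_isEmpty, Nat.cast_zero, zero_div]

lemma unit_left {Z : C} (hZ : IsZero Z) (x : HallAlg C) :
    hallMul (Finsupp.single ⟦Z⟧ 1) x = x := by
  rw [hallMul_single_left]
  have hZ' : IsZero ((⟦Z⟧ : IsoCls C).out) := hZ.of_iso (outIso Z)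
  calc x.sum (fun κ' b => ((1 : ℚ) * b) • hallMulBasis ((⟦Z⟧ : IsoCls C).out) κ'.out)
      = x.sum fun κ' b => Finsupp.single κ' b := by
        refine Finsupp.sum_congr fun κ' _ => ?_
        rw [hallMulBasis_zero_left hZ' κ'.out, one_mul, Finsupp.smul_single, smul_eq_mul,
          mul_one, Quotient.out_eq]
    _ = x := Finsupp.sum_single x

lemma unit_right {Z : C} (hZ : IsZero Z) (x : HallAlg C) :
    hallMul x (Finsupp.single ⟦Z⟧ 1) = x := by
  rw [hallMul_single_right]
  have hZ' : IsZero ((⟦Z⟧ : IsoCls C).out) := hZ.of_iso (outIso Z)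
  calc x.sum (fun κ' a => (a * (1 : ℚ)) • hallMulBasis κ'.out ((⟦Z⟧ : IsoCls C).out))
      = x.sum fun κ' a => Finsupp.single κ' a := by
        refine Finsupp.sum_congr fun κ' _ => ?_
        rw [hallMulBasis_zero_right hZ' κ'.out, mul_one, Finsupp.smul_single, smul_eq_mul,
          mul_one, Quotient.out_eq]
    _ = x := Finsupp.sum_single x

end Unit

end HallAssocAux

/-- **The Hall algebra is associative with unit `[0]`.** -/
theorem hallMul_assoc_and_unit [HallFinitary C] :
    (∀ x y z : HallAlg C, hallMul (hallMul x y) z = hallMul x (hallMul y z)) ∧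
    (∀ (Z : C), IsZero Z →
      (∀ x : HallAlg C, hallMul (Finsupp.single ⟦Z⟧ (1 : ℚ)) x = x) ∧
      (∀ x : HallAlg C, hallMul x (Finsupp.single ⟦Z⟧ (1 : ℚ)) = x)) :=
  ⟨hallMul_assoc, fun _Z hZ => ⟨unit_left hZ, unit_right hZ⟩⟩

end
end

section
/- Let A be a finitary abelian category with enough projectives, P its full subcategory of projectives, and m ≥ 2. In the Hall algebra H(C_m(P)) of m-cyclic complexes over P (with exactness defined component-wise), the subspace I spanned by the classes [M_∘] of m-cyclic complexes M_∘ = (M_i, d_i) with d_0 ≠ 0 is a two-sided ideal. -/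
open CategoryTheory CategoryTheory.Limits
open scoped Classical

noncomputable section

attribute [local instance] CategoryTheory.isIsomorphicSetoid

universe v u

variable {C : Type u} [Category.{v} C] [Abelian C]

variable (P : C → Prop)

/-- The full, extension-closed subcategory of objects satisfying `P`
(e.g. complexes of projectives). -/
abbrev SubCat := ObjectProperty.FullSubcategory P

/-- Hall structure constants of the exact subcategory, computed by ambient
short exact sequences. -/
def hallCoeffP (M N L : SubCat P) : ℚ := hallCoeff M.obj N.obj L.obj

/-- The underlying vector space of the Hall algebra of the subcategory. -/
abbrev HallAlgP := IsoCls (SubCat P) →₀ ℚ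

/-- Finiteness assumptions making the Hall multiplication well defined. -/
class HallFinitaryP : Prop where
  homFinite : ∀ X Y : SubCat P, Finite (X.obj ⟶ Y.obj)
  suppFinite : ∀ M N : SubCat P,
    {κ : IsoCls (SubCat P) | hallCoeffP P M N (Quotient.out κ) ≠ 0}.Finite

/-- The Hall product of two basis elements. -/
def hallMulBasisP [HallFinitaryP P] (M N : SubCat P) : HallAlgP P :=
  ⟨(HallFinitaryP.suppFinite M N).toFinset,
    fun κ => hallCoeffP P M N (Quotient.out κ), by
      intro κ
      simp [Set.Finite.mem_toFinset]⟩

/-- The multiplication of the Hall algebra of the subcategory. -/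
def hallMulP [HallFinitaryP P] (x y : HallAlgP P) : HallAlgP P :=
  x.sum fun κ a => y.sum fun κ' b => (a * b) • hallMulBasisP P κ.out κ'.out


/-- The category of `m`-cyclic complexes over `C`. -/
abbrev CyclicCx (m : ℕ) (C : Type u) [Category.{v} C] [Abelian C] :=
  HomologicalComplex C (ComplexShape.up' (1 : ZMod m))

/-- The predicate singling out `m`-cyclic complexes of projectives. -/
abbrev cyclicProj (m : ℕ) (C : Type u) [Category.{v} C] [Abelian C] :
    CyclicCx m C → Prop :=
  fun X => ∀ i, Projective (X.X i)

/-- If the middle term of a short exact sequence of homological complexes has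
vanishing differential `d i j`, then so do the outer terms. -/
lemma d_eq_zero_of_ses {ι : Type*} {c : ComplexShape ι}
    {N L M : HomologicalComplex C c} {f : N ⟶ L} {g : L ⟶ M}
    (h : IsSES f g) (i j : ι) (hL : L.d i j = 0) :
    M.d i j = 0 ∧ N.d i j = 0 := by
  obtain ⟨w, hse⟩ := h
  have hmono : Mono f := hse.mono_f
  have hepi : Epi g := hse.epi_g
  constructor
  · have hcomm : g.f i ≫ M.d i j = L.d i j ≫ g.f j := g.comm i j
    rw [hL, zero_comp] at hcomm
    exact zero_of_epi_comp (g.f i) hcomm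
  · have hcomm : f.f i ≫ L.d i j = N.d i j ≫ f.f j := f.comm i j
    rw [hL, comp_zero] at hcomm
    exact zero_of_comp_mono (f.f j) hcomm.symm

/-- If no short exact sequence `0 ⟶ N ⟶ L ⟶ M ⟶ 0` exists, the Hall
coefficient vanishes. -/
lemma hallCoeff_eq_zero {M N L : C} (h : ¬ ∃ p : (N ⟶ L) × (L ⟶ M), IsSES p.1 p.2) :
    hallCoeff M N L = 0 := by
  haveI : IsEmpty (ExtW M N L) := ⟨fun p => h ⟨p.1, p.2⟩⟩
  haveI : IsEmpty (ExtClasses M N L) := Quot.instIsEmpty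
  rw [hallCoeff, Nat.card_of_isEmpty]
  simp

/-- The "supported on `d₀ ≠ 0` classes" submodule. -/
def dzeroSupp (m : ℕ) [HallFinitaryP (cyclicProj m C)] :
    Submodule ℚ (HallAlgP (cyclicProj m C)) where
  carrier := {x | ∀ κ : IsoCls (SubCat (cyclicProj m C)),
    (Quotient.out κ).obj.d 0 1 = 0 → x κ = 0}
  add_mem' := fun ha hb κ h => by
    simp only [Finsupp.coe_add, Pi.add_apply, ha κ h, hb κ h, add_zero]
  zero_mem' := fun κ h => rfl
  smul_mem' := fun c x hx κ h => by
    simp only [Finsupp.coe_smul, Pi.smul_apply, hx κ h, smul_zero]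

lemma span_eq_dzeroSupp (m : ℕ) [HallFinitaryP (cyclicProj m C)] :
    Submodule.span ℚ
      {v : HallAlgP (cyclicProj m C) | ∃ κ : IsoCls (SubCat (cyclicProj m C)),
        (Quotient.out κ).obj.d 0 1 ≠ 0 ∧ v = Finsupp.single κ (1 : ℚ)}
      = dzeroSupp (C := C) m := by
  apply le_antisymm
  · rw [Submodule.span_le]
    rintro v ⟨κ, hd, rfl⟩ κ' h'
    have hne : κ ≠ κ' := fun h => hd (h ▸ h')
    exact Finsupp.single_eq_of_ne hne.symm
  · intro x hx
    have hrepr : x = ∑ κ ∈ x.support, Finsupp.single κ (x κ) :=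
      (Finsupp.sum_single x).symm
    rw [hrepr]
    apply Submodule.sum_mem
    intro κ hκ
    have : Finsupp.single κ (x κ) = (x κ) • Finsupp.single κ (1 : ℚ) := by
      rw [Finsupp.smul_single, smul_eq_mul, mul_one]
    rw [this]
    apply Submodule.smul_mem
    apply Submodule.subset_span
    refine ⟨κ, fun hd => ?_, rfl⟩
    exact Finsupp.mem_support_iff.mp hκ (hx κ hd)

lemma hallMulP_mem_dzeroSupp_left (m : ℕ) [HallFinitaryP (cyclicProj m C)]
    (x y : HallAlgP (cyclicProj m C)) (hx : x ∈ dzeroSupp (C := C) m) :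
    hallMulP _ x y ∈ dzeroSupp (C := C) m := by
  intro κ'' h''
  rw [hallMulP, Finsupp.sum_apply, Finsupp.sum]
  apply Finset.sum_eq_zero
  intro κ hκ
  have hdκ : (Quotient.out κ).obj.d 0 1 ≠ 0 := by
    intro hd
    exact Finsupp.mem_support_iff.mp hκ (hx κ hd)
  rw [Finsupp.sum_apply, Finsupp.sum]
  apply Finset.sum_eq_zero
  intro κ' _
  have hcoeff : hallCoeffP (cyclicProj m C) (Quotient.out κ) (Quotient.out κ')
      (Quotient.out κ'') = 0 := by
    apply hallCoeff_eq_zero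
    rintro ⟨p, hp⟩
    exact hdκ (d_eq_zero_of_ses hp 0 1 h'').1
  simp [hallMulBasisP, hcoeff]

lemma hallMulP_mem_dzeroSupp_right (m : ℕ) [HallFinitaryP (cyclicProj m C)]
    (x y : HallAlgP (cyclicProj m C)) (hx : x ∈ dzeroSupp (C := C) m) :
    hallMulP _ y x ∈ dzeroSupp (C := C) m := by
  intro κ'' h''
  rw [hallMulP, Finsupp.sum_apply, Finsupp.sum]
  apply Finset.sum_eq_zero
  intro κ _
  rw [Finsupp.sum_apply, Finsupp.sum]
  apply Finset.sum_eq_zero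
  intro κ' hκ'
  have hdκ : (Quotient.out κ').obj.d 0 1 ≠ 0 := by
    intro hd
    exact Finsupp.mem_support_iff.mp hκ' (hx κ' hd)
  have hcoeff : hallCoeffP (cyclicProj m C) (Quotient.out κ) (Quotient.out κ')
      (Quotient.out κ'') = 0 := by
    apply hallCoeff_eq_zero
    rintro ⟨p, hp⟩
    exact hdκ (d_eq_zero_of_ses hp 0 1 h'').2
  simp [hallMulBasisP, hcoeff]

/-- **The subspace `I` spanned by classes of `m`-cyclic complexes of projectives with
`d₀ ≠ 0` is a two-sided ideal of the Hall algebra `H(C_m(P))`.** -/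
theorem span_dzero_ne_zero_isIdeal (m : ℕ) (hm : 2 ≤ m)
    [HallFinitaryP (cyclicProj m C)] :
    ∀ x ∈ Submodule.span ℚ
      {v : HallAlgP (cyclicProj m C) | ∃ κ : IsoCls (SubCat (cyclicProj m C)),
        (Quotient.out κ).obj.d 0 1 ≠ 0 ∧ v = Finsupp.single κ (1 : ℚ)},
      ∀ y : HallAlgP (cyclicProj m C),
        hallMulP _ x y ∈ Submodule.span ℚ
          {v : HallAlgP (cyclicProj m C) | ∃ κ : IsoCls (SubCat (cyclicProj m C)),
            (Quotient.out κ).obj.d 0 1 ≠ 0 ∧ v = Finsupp.single κ (1 : ℚ)} ∧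
        hallMulP _ y x ∈ Submodule.span ℚ
          {v : HallAlgP (cyclicProj m C) | ∃ κ : IsoCls (SubCat (cyclicProj m C)),
            (Quotient.out κ).obj.d 0 1 ≠ 0 ∧ v = Finsupp.single κ (1 : ℚ)} := by
  intro x hx y
  rw [span_eq_dzeroSupp] at hx ⊢
  exact ⟨hallMulP_mem_dzeroSupp_left m x y hx, hallMulP_mem_dzeroSupp_right m x y hx⟩

end
end

section
/- Let A be a finitary hereditary abelian category with enough projectives and m ≥ 2. In C^m(P), for any objects M, N of A and 0 ≤ r < l < m−1, one has Ext^1_{C^m(P)}(T_M[r], T_N[l]) = 0. -/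
open CategoryTheory CategoryTheory.Limits ZeroObject

noncomputable section
universe v u
variable {C : Type u} [Category.{v} C] [Abelian C]

variable (Pr : C → Prop)

/-- Representatives of `n`-extensions of `M` by `N` (`n ≥ 1`): exact sequences
`0 → N → E_1 → ⋯ → E_n → M → 0` whose middle terms satisfy the predicate `Pr`
(cutting out the exact subcategory). -/
def NExtRep (n : ℕ) (M N : C) : Type (max u v) :=
  {S : ComposableArrows C (n + 1) //
    S.Exact ∧ Mono (S.map' 0 1 (by omega) (by omega)) ∧
    Epi (S.map' n (n + 1) (by omega) (by omega)) ∧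
    S.obj' 0 (by omega) = N ∧ S.obj' (n + 1) (by omega) = M ∧
    ∀ (i : ℕ) (h1 : 1 ≤ i) (h2 : i ≤ n), Pr (S.obj' i (by omega))}

/-- A morphism of `n`-extensions restricting to the identity on both ends; the
equivalence closure of this relation is the Yoneda equivalence of extensions. -/
def nextRel (n : ℕ) (M N : C) (S T : NExtRep Pr n M N) : Prop :=
  ∃ φ : S.1 ⟶ T.1,
    φ.app ⟨0, by omega⟩ =
      eqToHom (by
        obtain ⟨-, -, -, h, -⟩ := S.2
        obtain ⟨-, -, -, h', -⟩ := T.2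
        rw [show S.1.obj ⟨0, by omega⟩ = N from h, show T.1.obj ⟨0, by omega⟩ = N from h']) ∧
    φ.app ⟨n + 1, by omega⟩ =
      eqToHom (by
        obtain ⟨-, -, -, -, h, -⟩ := S.2
        obtain ⟨-, -, -, -, h', -⟩ := T.2
        rw [show S.1.obj ⟨n + 1, by omega⟩ = M from h,
          show T.1.obj ⟨n + 1, by omega⟩ = M from h'])

/-- `Ext^n` (`n ≥ 1`) of the exact subcategory cut out by `Pr`, as Yoneda extension
classes. -/
def ExtN (n : ℕ) (M N : C) := Quot (nextRel Pr n M N)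

/-- Cardinalities `|Ext^n(M, N)|`, with `Ext^0 = Hom`. -/
def extCardP (n : ℕ) (M N : C) : ℕ :=
  match n with
  | 0 => Nat.card (M ⟶ N)
  | k + 1 => Nat.card (ExtN Pr (k + 1) M N)

/-- The Euler form `⟨M,N⟩ = Σᵢ (-1)ⁱ dim_{F_q} Extⁱ(M,N)`, where the dimension of a
finite `F_q`-vector space is recovered as `log_q` of its cardinality. -/
def eulerP (q : ℕ) (M N : C) : ℤ :=
  ∑ᶠ n : ℕ, (-1 : ℤ) ^ n * (Nat.log q (extCardP Pr n M N) : ℤ)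

/-- The two-term cochain complex with `Q` in degree `n`, `P` in degree `n + 1` and
differential `f`. -/
def twoTerm {Q P : C} (f : Q ⟶ P) (n : ℤ) : CochainComplex C ℤ where
  X i := if i = n then Q else if i = n + 1 then P else 0
  d i j :=
    if h : i = n ∧ j = n + 1 then
      eqToHom (show (if i = n then Q else if i = n + 1 then P else 0) = Q by
          rw [if_pos h.1]) ≫ f ≫
        eqToHom (show P = (if j = n then Q else if j = n + 1 then P else 0) by
          rw [if_neg (show ¬ j = n by omega), if_pos h.2])
    else 0
  shape i j hij := by
    try dsimp at hij ⊢
    rw [dif_neg]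
    rintro ⟨rfl, rfl⟩
    exact hij rfl
  d_comp_d' i j k hij hjk := by
    try dsimp at hij hjk ⊢
    by_cases h : i = n ∧ j = n + 1
    · rw [dif_neg (show ¬(j = n ∧ k = n + 1) by rintro ⟨h2, -⟩; omega), comp_zero]
    · rw [dif_neg h, zero_comp]


/-- `C` is hereditary: every subobject of a projective object is projective. -/
def Hereditary (C : Type u) [Category.{v} C] [Abelian C] : Prop :=
  ∀ (X Y : C) (f : X ⟶ Y), Mono f → Projective Y → Projective X

/-- `0 → Ω →^δ P →^π M → 0` is a minimal projective resolution of `M`. -/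
def IsMinProjRes {Ω P M : C} (δ : Ω ⟶ P) (π : P ⟶ M) : Prop :=
  IsSES δ π ∧ Projective P ∧ ∀ θ : P ⟶ P, θ ≫ π = π → IsIso θ

/-- `m`-term complexes of projectives: complexes supported in degrees `1,…,m` with
projective components. -/
abbrev termProj (m : ℕ) : CochainComplex C ℤ → Prop :=
  fun X => (∀ i : ℤ, (i < 1 ∨ (m : ℤ) < i) → IsZero (X.X i)) ∧ ∀ i, Projective (X.X i)

section Ext1Aux

lemma twoTerm_X_isZero {Q P : C} (f : Q ⟶ P) (n i : ℤ) (h1 : i ≠ n) (h2 : i ≠ n + 1) :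
    IsZero ((twoTerm f n).X i) := by
  dsimp [twoTerm]
  rw [if_neg h1, if_neg h2]
  exact isZero_zero C

lemma twoTerm_X_projective {Q P : C} (f : Q ⟶ P) (n : ℤ) (hQ : Projective Q)
    (hP : Projective P) (i : ℤ) : Projective ((twoTerm f n).X i) := by
  dsimp [twoTerm]
  split
  · exact hQ
  · split
    · exact hP
    · infer_instance

lemma termProj_twoTerm (m : ℕ) {Q P : C} (f : Q ⟶ P) (n : ℤ) (h1 : 1 ≤ n)
    (h2 : n + 1 ≤ (m : ℤ)) (hQ : Projective Q) (hP : Projective P) :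
    termProj m (twoTerm f n) :=
  ⟨fun i hi => twoTerm_X_isZero f n i (by omega) (by omega),
    twoTerm_X_projective f n hQ hP⟩

lemma projective_biprod {P Q : C} (hP : Projective P) (hQ : Projective Q) :
    Projective (P ⊞ Q) where
  factors f e epi := by
    haveI := hP; haveI := hQ; haveI := epi
    exact ⟨biprod.desc (Projective.factorThru (biprod.inl ≫ f) e)
      (Projective.factorThru (biprod.inr ≫ f) e), by aesop_cat⟩

lemma termProj_biprod (m : ℕ) (X Y : CochainComplex C ℤ) (hX : termProj m X)
    (hY : termProj m Y) : termProj m (X ⊞ Y) := by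
  constructor
  · intro i hi
    refine IsZero.of_iso ?_ ((HomologicalComplex.eval C (ComplexShape.up ℤ) i).mapBiprod X Y)
    exact (biprod_isZero_iff _ _).2 ⟨hX.1 i hi, hY.1 i hi⟩
  · intro i
    have e : (X ⊞ Y).X i ≅ X.X i ⊞ Y.X i :=
      (HomologicalComplex.eval C (ComplexShape.up ℤ) i).mapBiprod X Y
    exact Projective.of_iso e.symm (projective_biprod (hX.2 i) (hY.2 i))

end Ext1Aux
/-- **In `C^m(P)`, `Ext¹(T_M[r], T_N[l]) = 0` for `0 ≤ r < l < m - 1`.**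
Here `T_M[r]` is the two-term complex `Ω_M → P_M` (a minimal projective resolution of
`M`) placed in degrees `(m-1-r, m-r)`. -/
theorem ext1_shifted_T_vanishes (hC : Hereditary C) [EnoughProjectives C]
    [∀ X Y : C, Finite (X ⟶ Y)] (m : ℕ) (hm : 2 ≤ m)
    {M N Ω Ω' P P' : C} {δ : Ω ⟶ P} {π : P ⟶ M} (hM : IsMinProjRes δ π)
    {δ' : Ω' ⟶ P'} {π' : P' ⟶ N} (hN : IsMinProjRes δ' π')
    (r l : ℕ) (hrl : r < l) (hl : (l : ℤ) < (m : ℤ) - 1) :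
    Subsingleton (ExtN (termProj (C := C) m) 1
      (twoTerm δ ((m : ℤ) - 1 - r)) (twoTerm δ' ((m : ℤ) - 1 - l))) := by
  classical
  obtain ⟨⟨wM, hsesM⟩, hPproj, -⟩ := hM
  obtain ⟨⟨wN, hsesN⟩, hP'proj, -⟩ := hN
  have hΩproj : Projective Ω := hC Ω P δ hsesM.mono_f hPproj
  have hΩ'proj : Projective Ω' := hC Ω' P' δ' hsesN.mono_f hP'proj
  set a : ℤ := (m : ℤ) - 1 - r with ha
  set b : ℤ := (m : ℤ) - 1 - l with hb
  set A : CochainComplex C ℤ := twoTerm δ a with hA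
  set B : CochainComplex C ℤ := twoTerm δ' b with hB
  have hPrA : termProj m A := termProj_twoTerm m δ a (by omega) (by omega) hΩproj hPproj
  have hPrB : termProj m B := termProj_twoTerm m δ' b (by omega) (by omega) hΩ'proj hP'proj
  -- the canonical split representative
  have w0 : (biprod.inl : B ⟶ B ⊞ A) ≫ (biprod.snd : B ⊞ A ⟶ A) = 0 := biprod.inl_snd
  have hsplit : (ShortComplex.mk _ _ w0).Splitting :=
    { r := biprod.fst
      s := biprod.inr
      f_r := biprod.inl_fst
      s_g := biprod.inr_snd
      id := biprod.total }
  let S0arr : ComposableArrows (CochainComplex C ℤ) 2 :=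
    ComposableArrows.mk₂ (biprod.inl : B ⟶ B ⊞ A) (biprod.snd : B ⊞ A ⟶ A)
  have hS0exact : S0arr.Exact := ComposableArrows.exact₂_mk _ w0 hsplit.exact
  let S0 : NExtRep (termProj (C := C) m) 1 A B :=
    ⟨S0arr, hS0exact, inferInstanceAs (Mono (biprod.inl : B ⟶ B ⊞ A)),
      inferInstanceAs (Epi (biprod.snd : B ⊞ A ⟶ A)), rfl, rfl,
      fun i h1 h2 => by
        obtain rfl : i = 1 := le_antisymm h2 h1
        exact termProj_biprod m B A hPrB hPrA⟩
  have key : ∀ S : NExtRep (termProj (C := C) m) 1 A B,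
      Quot.mk (nextRel (termProj (C := C) m) 1 A B) S0 =
        Quot.mk (nextRel (termProj (C := C) m) 1 A B) S := by
    intro S
    obtain ⟨hex, hmono, hepi, h0, h2, hmid⟩ := S.2
    set F := S.1 with hF
    let Bc : CochainComplex C ℤ := F.obj' 0
    let Ec : CochainComplex C ℤ := F.obj' 1
    let Ac : CochainComplex C ℤ := F.obj' 2
    let f : Bc ⟶ Ec := F.map' 0 1
    let g : Ec ⟶ Ac := F.map' 1 2
    have w : f ≫ g = 0 := hex.toIsComplex.zero 0
    let SC : ShortComplex (CochainComplex C ℤ) := ShortComplex.mk f g w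
    have hSE : SC.ShortExact := { exact := hex.exact 0, mono_f := hmono, epi_g := hepi }
    have hdeg := (HomologicalComplex.shortExact_iff_degreewise_shortExact SC).1 hSE
    have projA' : ∀ i : ℤ, Projective (Ac.X i) := fun i =>
      Projective.of_iso
        ((HomologicalComplex.eval C (ComplexShape.up ℤ) i).mapIso (eqToIso h2.symm))
        (twoTerm_X_projective δ a hΩproj hPproj i)
    have zeroA' : ∀ i : ℤ, i ≠ a → i ≠ a + 1 → IsZero (Ac.X i) := fun i hi1 hi2 =>
      IsZero.of_iso (twoTerm_X_isZero δ a i hi1 hi2)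
        ((HomologicalComplex.eval C (ComplexShape.up ℤ) i).mapIso (eqToIso h2))
    have zeroB' : ∀ i : ℤ, i ≠ b → i ≠ b + 1 → IsZero (Bc.X i) := fun i hi1 hi2 =>
      IsZero.of_iso (twoTerm_X_isZero δ' b i hi1 hi2)
        ((HomologicalComplex.eval C (ComplexShape.up ℤ) i).mapIso (eqToIso h0))
    have hepiD : ∀ i : ℤ, Epi (g.f i) := fun i => (hdeg i).epi_g
    let sf : ∀ i : ℤ, Ac.X i ⟶ Ec.X i := fun i =>
      @Projective.factorThru _ _ _ _ _ (projA' i) (𝟙 _) (g.f i) (hepiD i)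
    have hsf : ∀ i, sf i ≫ g.f i = 𝟙 _ := fun i =>
      @Projective.factorThru_comp _ _ _ _ _ (projA' i) (𝟙 _) (g.f i) (hepiD i)
    have comm : ∀ (i j : ℤ), (ComplexShape.up ℤ).Rel i j →
        sf i ≫ Ec.d i j = Ac.d i j ≫ sf j := by
      intro i j hij
      have hij' : i + 1 = j := hij
      by_cases hi : i = a ∨ i = a + 1
      · have hzB : IsZero (Bc.X j) := zeroB' j (by omega) (by omega)
        have hu : (sf i ≫ Ec.d i j - Ac.d i j ≫ sf j) ≫ g.f j = 0 := by
          rw [Preadditive.sub_comp, Category.assoc, Category.assoc, ← g.comm i j,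
            ← Category.assoc, hsf i, Category.id_comp, hsf j, Category.comp_id, sub_self]
        haveI : Mono ((SC.map (HomologicalComplex.eval C (ComplexShape.up ℤ) j)).f) :=
          (hdeg j).mono_f
        have hl0 : (hdeg j).exact.lift _ hu = 0 := hzB.eq_of_tgt _ _
        have hzero : sf i ≫ Ec.d i j - Ac.d i j ≫ sf j = 0 := by
          rw [← (hdeg j).exact.lift_f _ hu, hl0, Limits.zero_comp]; rfl
        rw [← sub_eq_zero]
        exact hzero
      · push_neg at hi
        exact (zeroA' i hi.1 hi.2).eq_of_src _ _
    let s : Ac ⟶ Ec := { f := sf, comm' := comm }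
    have hsg : s ≫ g = 𝟙 Ac := by
      ext i
      simp only [HomologicalComplex.comp_f, HomologicalComplex.id_f]
      exact hsf i
    let app₀ : B ⟶ Bc := eqToHom h0.symm
    let app₂ : A ⟶ Ac := eqToHom h2.symm
    let app₁ : B ⊞ A ⟶ Ec := biprod.desc (app₀ ≫ f) (app₂ ≫ s)
    have w₀ : S0arr.map' 0 1 ≫ app₁ = app₀ ≫ F.map' 0 1 := by
      show (biprod.inl : B ⟶ B ⊞ A) ≫ app₁ = app₀ ≫ f
      simp [app₁]
    have w₁ : S0arr.map' 1 2 ≫ app₂ = app₁ ≫ F.map' 1 2 := by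
      show (biprod.snd : B ⊞ A ⟶ A) ≫ app₂ = app₁ ≫ g
      refine biprod.hom_ext' _ _ ?_ ?_
      · rw [← Category.assoc, biprod.inl_snd, Limits.zero_comp, ← Category.assoc,
          biprod.inl_desc, Category.assoc, w, Limits.comp_zero]
      · rw [← Category.assoc, biprod.inr_snd, Category.id_comp, ← Category.assoc,
          biprod.inr_desc, Category.assoc, hsg, Category.comp_id]
    let φ : S0arr ⟶ F := ComposableArrows.homMk₂ app₀ app₁ app₂ w₀ w₁
    exact Quot.sound ⟨φ, rfl, rfl⟩
  refine ⟨fun x y => ?_⟩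
  obtain ⟨S, rfl⟩ := Quot.exists_rep x
  obtain ⟨T, rfl⟩ := Quot.exists_rep y
  rw [← key S, ← key T]

end
end

section
/- Let E be a finitary exact category of global dimension at most one over F_q. The integration map ∫ : H(E) → T_q(E), [M] ↦ X^{M̂}, is an algebra homomorphism, where T_q(E) is the Z[q^{±1}]-algebra with basis {X^α : α ∈ K(E)} and multiplication X^α * X^β = q^{−⟨α,β⟩} X^{α+β}, with ⟨·,·⟩ the Euler form on K(E). -/
open CategoryTheory CategoryTheory.Limits
open scoped Classical

noncomputable section

attribute [local instance] CategoryTheory.isIsomorphicSetoid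

universe v u

variable {C : Type u} [Category.{v} C] [Abelian C]

variable (P : C → Prop)

open ZeroObject

variable (Pr : C → Prop)

variable (Pr : C → Prop)

/-- The defining relations of the Grothendieck group `K(E)` of the exact subcategory. -/
def grothRelSetP : Set (FreeAbelianGroup (IsoCls (SubCat Pr))) :=
  {x | ∃ (M N L : SubCat Pr) (f : N.obj ⟶ L.obj) (g : L.obj ⟶ M.obj), IsSES f g ∧
    x = FreeAbelianGroup.of ⟦L⟧ - FreeAbelianGroup.of ⟦N⟧ - FreeAbelianGroup.of ⟦M⟧}

/-- The Grothendieck group `K(E)` of the exact subcategory. -/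
abbrev K0P := FreeAbelianGroup (IsoCls (SubCat Pr)) ⧸ AddSubgroup.closure (grothRelSetP Pr)

/-- The class `M̂ ∈ K(E)` of an object. -/
def K0clsP (M : SubCat Pr) : K0P Pr := QuotientAddGroup.mk (FreeAbelianGroup.of ⟦M⟧)

/-- The quantum torus `T_q(E)`: basis `X^α`, `α ∈ K(E)`, with
`X^α * X^β = q^{-⟨α,β⟩} X^{α+β}` for a given Euler form `χ` on `K(E)`. -/
def tMul (q : ℕ) (χ : K0P Pr → K0P Pr → ℤ) (x y : K0P Pr →₀ ℚ) : K0P Pr →₀ ℚ :=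
  x.sum fun α a => y.sum fun β b =>
    (a * b * (q : ℚ) ^ (-(χ α β))) • Finsupp.single (α + β) (1 : ℚ)

/-- The integration map `∫ : H(E) → T_q(E)`, `[M] ↦ X^{M̂}`. -/
def intMap (x : HallAlgP Pr) : K0P Pr →₀ ℚ :=
  x.sum fun κ a => Finsupp.single (QuotientAddGroup.mk (FreeAbelianGroup.of κ)) a

namespace IntAux

lemma isSES_transport {N L L' M : C} {f : N ⟶ L} {g : L ⟶ M} (h : IsSES f g) (e : L ≅ L') :
    IsSES (f ≫ e.hom) (e.inv ≫ g) := by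
  obtain ⟨w, hse⟩ := h
  have w' : (f ≫ e.hom) ≫ e.inv ≫ g = 0 := by
    rw [Category.assoc, Iso.hom_inv_id_assoc, w]
  exact ⟨w', ShortComplex.shortExact_of_iso
    (ShortComplex.isoMk (Iso.refl N) e (Iso.refl M) (by simp) (by simp) :
      ShortComplex.mk f g w ≅ ShortComplex.mk _ _ w') hse⟩

section

variable {Pr : C → Prop} {M N : C}

def mid (T : NExtRep Pr 1 M N) : C := T.1.obj ⟨1, by omega⟩

lemma hN (T : NExtRep Pr 1 M N) : T.1.obj ⟨0, by omega⟩ = N := T.2.2.2.2.1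

lemma hM (T : NExtRep Pr 1 M N) : T.1.obj ⟨2, by omega⟩ = M := T.2.2.2.2.2.1

def fOf (T : NExtRep Pr 1 M N) : N ⟶ mid T :=
  eqToHom (hN T).symm ≫ T.1.map' 0 1

def gOf (T : NExtRep Pr 1 M N) : mid T ⟶ M :=
  T.1.map' 1 2 ≫ eqToHom (hM T)

lemma isSES_fOf_gOf (T : NExtRep Pr 1 M N) : IsSES (fOf T) (gOf T) := by
  obtain ⟨hex, hmono, hepi, h0, h1, -⟩ := T.2
  have w0 : T.1.map' 0 1 ≫ T.1.map' 1 2 = 0 := hex.toIsComplex.zero 0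
  have hse : (ShortComplex.mk _ _ w0).ShortExact :=
    ShortComplex.ShortExact.mk' (hex.exact 0) hmono hepi
  have w : fOf T ≫ gOf T = 0 := by
    erw [fOf, gOf, Category.assoc, reassoc_of% w0, zero_comp, comp_zero]
  refine ⟨w, ShortComplex.shortExact_of_iso
    (ShortComplex.isoMk (eqToIso (hN T)) (Iso.refl _) (eqToIso (hM T)) ?_ ?_ :
      ShortComplex.mk _ _ w0 ≅ ShortComplex.mk (fOf T) (gOf T) w) hse⟩
  · simp [fOf, mid]
  · simp [gOf, mid]

def Rel (S T : NExtRep Pr 1 M N) : Prop :=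
  ∃ e : mid S ≅ mid T, fOf S ≫ e.hom = fOf T ∧ e.hom ≫ gOf T = gOf S

lemma rel_refl (S : NExtRep Pr 1 M N) : Rel S S := ⟨Iso.refl _, by simp, by simp⟩

lemma rel_symm {S T : NExtRep Pr 1 M N} (h : Rel S T) : Rel T S := by
  obtain ⟨e, h1, h2⟩ := h
  exact ⟨e.symm, by simp [← h1], by simp [← h2]⟩

lemma rel_trans {S T U : NExtRep Pr 1 M N} (h : Rel S T) (h' : Rel T U) : Rel S U := by
  obtain ⟨e, h1, h2⟩ := h
  obtain ⟨e', h1', h2'⟩ := h'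
  exact ⟨e ≪≫ e', by rw [Iso.trans_hom, ← Category.assoc, h1, h1'],
    by rw [Iso.trans_hom, Category.assoc, h2', h2]⟩

lemma rel_of_nextRel {S T : NExtRep Pr 1 M N} (h : nextRel Pr 1 M N S T) : Rel S T := by
  obtain ⟨φ, h0, h2⟩ := h
  obtain ⟨wS, hseS⟩ := isSES_fOf_gOf S
  obtain ⟨wT, hseT⟩ := isSES_fOf_gOf T
  have h0' : ComposableArrows.app' φ 0 (Nat.zero_le 2) = eqToHom ((hN S).trans (hN T).symm) := h0
  have h2' : ComposableArrows.app' φ 2 (le_refl 2) = eqToHom ((hM S).trans (hM T).symm) := h2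
  have comm12 : (𝟙 N) ≫ fOf T = fOf S ≫ ComposableArrows.app' φ 1 one_le_two := by
    erw [Category.id_comp, fOf, fOf, Category.assoc, ComposableArrows.naturality' φ 0 1, h0',
      eqToHom_trans_assoc]
    rfl
  have comm23 : ComposableArrows.app' φ 1 one_le_two ≫ gOf T = gOf S ≫ 𝟙 M := by
    erw [Category.comp_id, gOf, gOf, ← Category.assoc, ← ComposableArrows.naturality' φ 1 2, h2',
      Category.assoc, eqToHom_trans]
    rfl
  let Φ : ShortComplex.mk (fOf S) (gOf S) wS ⟶ ShortComplex.mk (fOf T) (gOf T) wT :=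
    { τ₁ := 𝟙 N, τ₂ := ComposableArrows.app' φ 1 one_le_two, τ₃ := 𝟙 M,
      comm₁₂ := comm12, comm₂₃ := comm23 }
  haveI hiso : IsIso (ComposableArrows.app' φ 1 one_le_two) :=
    ShortComplex.isIso₂_of_shortExact_of_isIso₁₃' Φ hseS hseT
      (by dsimp [Φ]; infer_instance) (by dsimp [Φ]; infer_instance)
  refine ⟨@asIso _ _ _ _ (ComposableArrows.app' φ 1 one_le_two) hiso, ?_, ?_⟩
  · exact comm12.symm.trans (Category.id_comp _)
  · exact comm23.trans (Category.comp_id _)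

lemma rel_of_eqvGen {S T : NExtRep Pr 1 M N}
    (h : Relation.EqvGen (nextRel Pr 1 M N) S T) : Rel S T := by
  induction h with
  | rel _ _ h => exact rel_of_nextRel h
  | refl S => exact rel_refl S
  | symm _ _ _ ih => exact rel_symm ih
  | trans _ _ _ _ _ ih₁ ih₂ => exact rel_trans ih₁ ih₂

def toRep {L : C} (hL : Pr L) (p : ExtW M N L) : NExtRep Pr 1 M N :=
  ⟨ComposableArrows.mk₂ p.1.1 p.1.2,
    ComposableArrows.exact₂_mk _ p.2.choose p.2.choose_spec.exact,
    p.2.choose_spec.mono_f, p.2.choose_spec.epi_g, rfl, rfl,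
    fun i h1 h2 => by obtain rfl : i = 1 := le_antisymm h2 h1; exact hL⟩

lemma fOf_toRep {L : C} (hL : Pr L) (p : ExtW M N L) : fOf (toRep hL p) = p.1.1 := by
  erw [fOf, eqToHom_refl, Category.id_comp]
  rfl

lemma gOf_toRep {L : C} (hL : Pr L) (p : ExtW M N L) : gOf (toRep hL p) = p.1.2 := by
  erw [gOf, eqToHom_refl, Category.comp_id]
  rfl

lemma nextRel_toRep {L : C} (hL : Pr L) {p q : ExtW M N L} (h : extRel M N L p q) :
    nextRel Pr 1 M N (toRep hL p) (toRep hL q) := by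
  obtain ⟨θ, h1, h2⟩ := h
  refine ⟨ComposableArrows.homMk₂ (𝟙 N) θ.hom (𝟙 M) ?_ ?_, ?_, ?_⟩
  · show p.1.1 ≫ θ.hom = 𝟙 N ≫ q.1.1
    rw [Category.id_comp]; exact h1
  · show p.1.2 ≫ 𝟙 M = θ.hom ≫ q.1.2
    rw [Category.comp_id]; exact h2.symm
  · rfl
  · rfl

def midP (T : NExtRep Pr 1 M N) : ObjectProperty.FullSubcategory Pr :=
  ⟨mid T, T.2.2.2.2.2.2 1 le_rfl le_rfl⟩

def midCls : ExtN Pr 1 M N → IsoCls (ObjectProperty.FullSubcategory Pr) :=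
  Quot.lift (fun T => ⟦midP T⟧) fun S T h => by
    obtain ⟨e, -, -⟩ := rel_of_nextRel h
    exact Quotient.sound ⟨ObjectProperty.isoMk _ e⟩

def toFiber (κ : IsoCls (ObjectProperty.FullSubcategory Pr)) :
    ExtClasses M N (Quotient.out κ).obj → {t : ExtN Pr 1 M N // midCls t = κ} :=
  Quot.lift
    (fun p => ⟨Quot.mk _ (toRep (Quotient.out κ).2 p), Quotient.out_eq κ⟩)
    (fun p q h => Subtype.ext (Quot.sound (nextRel_toRep _ h)))

lemma toFiber_bijective (κ : IsoCls (ObjectProperty.FullSubcategory Pr)) :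
    Function.Bijective (toFiber (Pr := Pr) (M := M) (N := N) κ) := by
  constructor
  · rintro ⟨p⟩ ⟨q⟩ hpq
    have h' : Quot.mk _ (toRep (Quotient.out κ).2 p) = Quot.mk _ (toRep (Quotient.out κ).2 q) :=
      congrArg Subtype.val hpq
    obtain ⟨e, h1, h2⟩ := rel_of_eqvGen (Quot.eq.mp h')
    apply Quot.sound
    rw [fOf_toRep, fOf_toRep] at h1
    rw [gOf_toRep, gOf_toRep] at h2
    exact ⟨e, h1, h2⟩
  · rintro ⟨t, ht⟩
    obtain ⟨T, rfl⟩ := Quot.exists_rep t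
    obtain ⟨eS⟩ : midP T ≈ Quotient.out κ := Quotient.mk_eq_iff_out.mp ht
    let e : mid T ≅ (Quotient.out κ).obj := ⟨eS.hom.hom, eS.inv.hom, ObjectProperty.isoHom_inv_id_hom eS,
      ObjectProperty.isoInv_hom_id_hom eS⟩
    refine ⟨Quot.mk _ ⟨(fOf T ≫ e.hom, e.inv ≫ gOf T),
      isSES_transport (isSES_fOf_gOf T) e⟩, ?_⟩
    apply Subtype.ext
    apply Quot.sound
    refine ⟨ComposableArrows.homMk₂ (eqToHom (hN T).symm) e.inv (eqToHom (hM T).symm) ?_ ?_,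
      rfl, rfl⟩
    · show (fOf T ≫ e.hom) ≫ e.inv = eqToHom (hN T).symm ≫ T.1.map' 0 1
      erw [Category.assoc, Iso.hom_inv_id, Category.comp_id, fOf]
      rfl
    · show (e.inv ≫ gOf T) ≫ eqToHom (hM T).symm = e.inv ≫ T.1.map' 1 2
      erw [gOf, Category.assoc, Category.assoc, eqToHom_trans, eqToHom_refl, Category.comp_id]

end

lemma k0_of_ses {Pr : C → Prop} {M N L : ObjectProperty.FullSubcategory Pr}
    (f : N.obj ⟶ L.obj) (g : L.obj ⟶ M.obj) (h : IsSES f g) :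
    K0clsP Pr L = K0clsP Pr M + K0clsP Pr N := by
  have hmem : FreeAbelianGroup.of ⟦L⟧ - FreeAbelianGroup.of ⟦N⟧ - FreeAbelianGroup.of ⟦M⟧
      ∈ AddSubgroup.closure (grothRelSetP Pr) :=
    AddSubgroup.subset_closure ⟨M, N, L, f, g, h, rfl⟩
  have hmem' : -(FreeAbelianGroup.of ⟦L⟧)
      + (FreeAbelianGroup.of ⟦M⟧ + FreeAbelianGroup.of ⟦N⟧)
      ∈ AddSubgroup.closure (grothRelSetP Pr) := by
    have := (AddSubgroup.closure (grothRelSetP Pr)).neg_mem hmem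
    convert this using 1
    abel
  rw [K0clsP, K0clsP, K0clsP, ← QuotientAddGroup.mk_add]
  exact QuotientAddGroup.eq.mpr hmem'

lemma sum_card_extClasses (Pr : C → Prop) [HallFinitaryP Pr] (M N : ObjectProperty.FullSubcategory Pr)
    (hfin : Finite (ExtN Pr 1 M.obj N.obj)) :
    ∑ κ ∈ (HallFinitaryP.suppFinite (P := Pr) M N).toFinset,
        Nat.card (ExtClasses M.obj N.obj (Quotient.out κ).obj)
      = Nat.card (ExtN Pr 1 M.obj N.obj) := by
  classical
  haveI hft : Fintype (ExtN Pr 1 M.obj N.obj) := Fintype.ofFinite _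
  have hcard : ∀ κ : IsoCls (ObjectProperty.FullSubcategory Pr),
      Nat.card (ExtClasses M.obj N.obj (Quotient.out κ).obj)
        = Nat.card {t : ExtN Pr 1 M.obj N.obj // midCls t = κ} :=
    fun κ => Nat.card_eq_of_bijective _ (toFiber_bijective (Pr := Pr) (M := M.obj) (N := N.obj) κ)
  have hhomfin : Finite (M.obj ⟶ N.obj) := HallFinitaryP.homFinite (P := Pr) M N
  have hhomne : Nat.card (M.obj ⟶ N.obj) ≠ 0 := Nat.card_ne_zero.mpr ⟨⟨0⟩, hhomfin⟩
  have hmem : ∀ κ : IsoCls (ObjectProperty.FullSubcategory Pr),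
      κ ∈ (HallFinitaryP.suppFinite (P := Pr) M N).toFinset ↔
        Nonempty {t : ExtN Pr 1 M.obj N.obj // midCls t = κ} := by
    intro κ
    rw [Set.Finite.mem_toFinset]
    have hd : (Nat.card (M.obj ⟶ N.obj) : ℚ) ≠ 0 := Nat.cast_ne_zero.mpr hhomne
    show hallCoeffP Pr M N (Quotient.out κ) ≠ 0 ↔ _
    rw [hallCoeffP, hallCoeff, div_ne_zero_iff]
    constructor
    · rintro ⟨hn, -⟩
      have h1 : Nat.card (ExtClasses M.obj N.obj (Quotient.out κ).obj) ≠ 0 :=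
        Nat.cast_ne_zero.mp hn
      rw [hcard κ] at h1
      exact (Nat.card_ne_zero.mp h1).1
    · intro hne
      refine ⟨?_, hd⟩
      have h1 : Nat.card {t : ExtN Pr 1 M.obj N.obj // midCls t = κ} ≠ 0 :=
        Nat.card_ne_zero.mpr ⟨hne, Subtype.finite⟩
      rw [← hcard κ] at h1
      exact Nat.cast_ne_zero.mpr h1
  have key : Fintype.card (ExtN Pr 1 M.obj N.obj)
      = ∑ κ ∈ (HallFinitaryP.suppFinite (P := Pr) M N).toFinset,
          (Finset.univ.filter fun t : ExtN Pr 1 M.obj N.obj => midCls t = κ).card := by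
    rw [← Finset.card_univ]
    apply Finset.card_eq_sum_card_fiberwise
    intro t _
    exact (hmem (midCls t)).mpr ⟨⟨t, rfl⟩⟩
  calc ∑ κ ∈ (HallFinitaryP.suppFinite (P := Pr) M N).toFinset,
        Nat.card (ExtClasses M.obj N.obj (Quotient.out κ).obj)
      = ∑ κ ∈ (HallFinitaryP.suppFinite (P := Pr) M N).toFinset,
          (Finset.univ.filter fun t : ExtN Pr 1 M.obj N.obj => midCls t = κ).card := by
        refine Finset.sum_congr rfl fun κ _ => ?_
        rw [hcard κ, Nat.card_eq_fintype_card, Fintype.card_subtype]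
    _ = Fintype.card (ExtN Pr 1 M.obj N.obj) := key.symm
    _ = Nat.card (ExtN Pr 1 M.obj N.obj) := Nat.card_eq_fintype_card.symm

lemma intMap_hallMulBasis {Pr : C → Prop} [HallFinitaryP Pr] (q : ℕ) (hq : 1 < q)
    (M N : ObjectProperty.FullSubcategory Pr) (d0 d1 : ℕ)
    (hd0 : Nat.card (M.obj ⟶ N.obj) = q ^ d0)
    (hd1 : Nat.card (ExtN Pr 1 M.obj N.obj) = q ^ d1) :
    intMap Pr (hallMulBasisP Pr M N)
      = ((q : ℚ) ^ ((d1 : ℤ) - (d0 : ℤ))) • Finsupp.single (K0clsP Pr M + K0clsP Pr N) (1 : ℚ) := by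
  have hq0 : (q : ℚ) ≠ 0 := Nat.cast_ne_zero.mpr (by omega)
  have hfinE : Finite (ExtN Pr 1 M.obj N.obj) :=
    Nat.finite_of_card_ne_zero (by rw [hd1]; exact pow_ne_zero _ (by omega))
  have hsupp : (hallMulBasisP Pr M N).support
      = (HallFinitaryP.suppFinite (P := Pr) M N).toFinset := rfl
  have hval : ∀ κ, hallMulBasisP Pr M N κ = hallCoeffP Pr M N (Quotient.out κ) := fun _ => rfl
  have hclass : ∀ κ ∈ (hallMulBasisP Pr M N).support,
      (QuotientAddGroup.mk (FreeAbelianGroup.of κ) : K0P Pr) = K0clsP Pr M + K0clsP Pr N := by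
    intro κ hκ
    have hne : hallCoeffP Pr M N (Quotient.out κ) ≠ 0 := by
      rw [← hval]; exact Finsupp.mem_support_iff.mp hκ
    have hcne : (Nat.card (ExtClasses M.obj N.obj (Quotient.out κ).obj) : ℚ) ≠ 0 := by
      intro h0; exact hne (by rw [hallCoeffP, hallCoeff, h0, zero_div])
    obtain ⟨pq⟩ : Nonempty (ExtClasses M.obj N.obj (Quotient.out κ).obj) :=
      (Nat.card_ne_zero.mp (Nat.cast_ne_zero.mp hcne)).1
    obtain ⟨p, -⟩ := Quot.exists_rep pq
    have h := k0_of_ses (M := M) (N := N) (L := Quotient.out κ) p.1.1 p.1.2 p.2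
    rw [← h, K0clsP, Quotient.out_eq]
  rw [intMap, Finsupp.sum]
  rw [Finset.sum_congr rfl (fun κ hκ => by rw [hclass κ hκ])]
  have hss : (∑ κ ∈ (hallMulBasisP Pr M N).support,
      Finsupp.single (K0clsP Pr M + K0clsP Pr N) (hallMulBasisP Pr M N κ))
      = Finsupp.single (K0clsP Pr M + K0clsP Pr N)
          (∑ κ ∈ (hallMulBasisP Pr M N).support, hallMulBasisP Pr M N κ) :=
    (map_sum (Finsupp.singleAddHom (K0clsP Pr M + K0clsP Pr N))
      (fun κ => hallMulBasisP Pr M N κ) (hallMulBasisP Pr M N).support).symm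
  rw [hss, Finsupp.smul_single, smul_eq_mul, mul_one]
  congr 1
  have hsum : ((∑ κ ∈ (HallFinitaryP.suppFinite (P := Pr) M N).toFinset,
      Nat.card (ExtClasses M.obj N.obj (Quotient.out κ).obj) : ℕ) : ℚ) = (q : ℚ) ^ d1 := by
    rw [sum_card_extClasses Pr M N hfinE, hd1]
    push_cast
    ring
  calc ∑ κ ∈ (hallMulBasisP Pr M N).support, hallMulBasisP Pr M N κ
      = ∑ κ ∈ (HallFinitaryP.suppFinite (P := Pr) M N).toFinset,
          (Nat.card (ExtClasses M.obj N.obj (Quotient.out κ).obj) : ℚ)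
            / (Nat.card (M.obj ⟶ N.obj) : ℚ) := by
        rw [hsupp]
        exact Finset.sum_congr rfl fun κ _ => rfl
    _ = ((∑ κ ∈ (HallFinitaryP.suppFinite (P := Pr) M N).toFinset,
          Nat.card (ExtClasses M.obj N.obj (Quotient.out κ).obj) : ℕ) : ℚ)
            / ((q : ℚ) ^ d0) := by
        rw [← Finset.sum_div, hd0]
        push_cast
        ring
    _ = (q : ℚ) ^ ((d1 : ℤ) - (d0 : ℤ)) := by
        rw [hsum, zpow_sub₀ hq0, zpow_natCast, zpow_natCast]

end IntAux


/-- **The integration map `∫ : H(E) → T_q(E)`, `[M] ↦ X^{M̂}`, is an algebra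
homomorphism for a finitary exact category `E` of global dimension at most one over
`F_q`.** Here `E` is modelled as the full subcategory of objects of an abelian category
satisfying `Pr`, with ambient exact structure, and `χ` is the Euler form of `E`
descended to `K(E)`. -/
theorem intMap_algHom (q : ℕ) (hq : 1 < q) [HallFinitaryP Pr]
    (hhom : ∀ M N : SubCat Pr, ∃ d : ℕ, Nat.card (M.obj ⟶ N.obj) = q ^ d)
    (hext : ∀ M N : SubCat Pr, ∃ d : ℕ, Nat.card (ExtN Pr 1 M.obj N.obj) = q ^ d)
    (hgl : ∀ i : ℕ, 2 ≤ i → ∀ M N : SubCat Pr, Subsingleton (ExtN Pr i M.obj N.obj))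
    (χ : K0P Pr → K0P Pr → ℤ)
    (hχ : ∀ M N : SubCat Pr, χ (K0clsP Pr M) (K0clsP Pr N) =
      (Nat.log q (Nat.card (M.obj ⟶ N.obj)) : ℤ) -
        (Nat.log q (Nat.card (ExtN Pr 1 M.obj N.obj)) : ℤ)) :
    ∀ x y : HallAlgP Pr,
      intMap Pr (hallMulP Pr x y) = tMul Pr q χ (intMap Pr x) (intMap Pr y) := by
  have hq0 : (q : ℚ) ≠ 0 := Nat.cast_ne_zero.mpr (by omega)
  set c : IsoCls (SubCat Pr) → K0P Pr := fun κ => QuotientAddGroup.mk (FreeAbelianGroup.of κ)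
    with hc
  have hck : ∀ κ : IsoCls (SubCat Pr), c κ = K0clsP Pr (Quotient.out κ) := by
    intro κ; rw [hc, K0clsP, Quotient.out_eq]
  have hint : ∀ z : HallAlgP Pr, intMap Pr z = Finsupp.mapDomain c z := fun _ => rfl
  have hadd : ∀ u v : HallAlgP Pr, intMap Pr (u + v) = intMap Pr u + intMap Pr v := fun u v => by
    rw [hint, hint, hint, Finsupp.mapDomain_add]
  have hsmul : ∀ (r : ℚ) (u : HallAlgP Pr), intMap Pr (r • u) = r • intMap Pr u := fun r u => by
    rw [hint, hint, Finsupp.mapDomain_smul]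
  have hkey : ∀ κ κ' : IsoCls (SubCat Pr),
      intMap Pr (hallMulBasisP Pr (Quotient.out κ) (Quotient.out κ'))
        = ((q : ℚ) ^ (-(χ (c κ) (c κ')))) • Finsupp.single (c κ + c κ') (1 : ℚ) := by
    intro κ κ'
    obtain ⟨d0, hd0⟩ := hhom (Quotient.out κ) (Quotient.out κ')
    obtain ⟨d1, hd1⟩ := hext (Quotient.out κ) (Quotient.out κ')
    have hχv : χ (c κ) (c κ') = (d0 : ℤ) - (d1 : ℤ) := by
      rw [hck, hck, hχ, hd0, hd1, Nat.log_pow hq, Nat.log_pow hq]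
    rw [hχv, neg_sub, hck κ, hck κ']
    exact IntAux.intMap_hallMulBasis q hq _ _ d0 d1 hd0 hd1
  intro x y
  have L1 : intMap Pr (hallMulP Pr x y)
      = x.sum fun κ a => y.sum fun κ' b =>
          (a * b) • intMap Pr (hallMulBasisP Pr (Quotient.out κ) (Quotient.out κ')) := by
    rw [hallMulP]
    refine (map_finsuppSum (AddMonoidHom.mk' (intMap Pr) hadd) x _).trans ?_
    refine Finsupp.sum_congr fun κ _ => ?_
    refine (map_finsuppSum (AddMonoidHom.mk' (intMap Pr) hadd) y _).trans ?_
    exact Finsupp.sum_congr fun κ' _ => hsmul _ _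
  have R1 : tMul Pr q χ (intMap Pr x) (intMap Pr y)
      = x.sum fun κ a => y.sum fun κ' b =>
          (a * b * (q : ℚ) ^ (-(χ (c κ) (c κ')))) • Finsupp.single (c κ + c κ') (1 : ℚ) := by
    rw [tMul, hint x, hint y]
    refine (Finsupp.sum_mapDomain_index ?_ ?_).trans ?_
    · intro α; simp [Finsupp.sum]
    · intro α m₁ m₂; simp [add_mul, add_smul, Finsupp.sum_add]
    · refine Finsupp.sum_congr fun κ _ => ?_
      refine (Finsupp.sum_mapDomain_index ?_ ?_).trans ?_
      · intro β; simp
      · intro β m₁ m₂; simp [mul_add, add_mul, add_smul]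
      · exact Finsupp.sum_congr fun κ' _ => rfl
  rw [L1, R1]
  refine Finsupp.sum_congr fun κ _ => Finsupp.sum_congr fun κ' _ => ?_
  rw [hkey κ κ', smul_smul]


end
end
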